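/- Suppose W ≥ 6d, L ≥ 1, and N ≤ W·⌊W/(6d)⌋·L. Then for any real numbers x_0 < x_1 < ⋯ < x_N < x_{N+1}, every function in S^d(x_0,…,x_{N+1}) belongs to NN_{1,d}(W+d+1, 2L). -/

import Mathlib

open Finset
open scoped BigOperators

/-- ReLU activation. -/
noncomputable def relu (x : ℝ) : ℝ := max x 0

/-- Parameters of a fully connected feed-forward ReLU neural network with input
dimension `d` and output dimension `k`. -/
structure MLP (d k : ℕ) where
  depth : ℕ
  width : ℕ → ℕ
  width_in : width 0 = d
  width_out : width (depth + 1) = k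
  A : (ℓ : ℕ) → Matrix (Fin (width (ℓ + 1))) (Fin (width ℓ)) ℝ
  b : (ℓ : ℕ) → Fin (width (ℓ + 1)) → ℝ

namespace MLP

variable {d k : ℕ}

/-- Hidden layer outputs: `φ₀(x) = x`, `φ_{ℓ+1}(x) = σ(A_ℓ φ_ℓ(x) + b_ℓ)`. -/
noncomputable def layer (φ : MLP d k) (x : Fin d → ℝ) : (ℓ : ℕ) → Fin (φ.width ℓ) → ℝ
  | 0 => fun i => x (Fin.cast φ.width_in i)
  | ℓ + 1 => fun i => relu ((φ.A ℓ).mulVec (layer φ x ℓ) i + φ.b ℓ i)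

/-- The function computed by the network: `φ(x) = A_L φ_L(x) + b_L`. -/
noncomputable def eval (φ : MLP d k) (x : Fin d → ℝ) : Fin k → ℝ := fun j =>
  (φ.A φ.depth).mulVec (φ.layer x φ.depth) (Fin.cast φ.width_out.symm j) +
    φ.b φ.depth (Fin.cast φ.width_out.symm j)

/-- Maximum ℓ¹-norm of the rows of the augmented matrix `(A, b)`. -/
noncomputable def augNorm {m n : ℕ} (A : Matrix (Fin m) (Fin n) ℝ) (b : Fin m → ℝ) : ℝ :=
  ⨆ i : Fin m, ((∑ j, |A i j|) + |b i|)

/-- The norm constraint `κ(θ) = ‖(A_L,b_L)‖ ∏_{ℓ<L} max{‖(A_ℓ,b_ℓ)‖, 1}`. -/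
noncomputable def kappa (φ : MLP d k) : ℝ :=
  augNorm (φ.A φ.depth) (φ.b φ.depth) *
    ∏ ℓ ∈ Finset.range φ.depth, max (augNorm (φ.A ℓ) (φ.b ℓ)) 1

end MLP

/-- The class `NN_{d,k}(W, L)` of ReLU networks with width at most `W` and depth `L`. -/
def NNSet (d k W L : ℕ) : Set ((Fin d → ℝ) → Fin k → ℝ) :=
  {f | ∃ φ : MLP d k, φ.depth = L ∧ (∀ ℓ, 1 ≤ ℓ → ℓ ≤ L → φ.width ℓ ≤ W) ∧ f = φ.eval}

/-- The norm-constrained class `NN_{d,k}(W, L, K)`. -/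
def NNSetNorm (d k W L : ℕ) (K : ℝ) : Set ((Fin d → ℝ) → Fin k → ℝ) :=
  {f | ∃ φ : MLP d k, φ.depth = L ∧ (∀ ℓ, 1 ≤ ℓ → ℓ ≤ L → φ.width ℓ ≤ W) ∧
      φ.kappa ≤ K ∧ f = φ.eval}

/-- Scalar-valued networks `NN_{d,1}(W, L)`, viewed as maps `ℝ^d → ℝ`. -/
def NNScalar (d W L : ℕ) : Set ((Fin d → ℝ) → ℝ) :=
  {f | ∃ g ∈ NNSet d 1 W L, f = fun x => g x 0}

/-- Scalar-valued norm-constrained networks `NN_{d,1}(W, L, K)`, viewed as maps `ℝ^d → ℝ`. -/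
def NNScalarNorm (d W L : ℕ) (K : ℝ) : Set ((Fin d → ℝ) → ℝ) :=
  {f | ∃ g ∈ NNSetNorm d 1 W L K, f = fun x => g x 0}

/-- Networks `NN_{1,k}(W, L)` with one-dimensional input, viewed as maps `ℝ → ℝ^k`. -/
def NNFromReal (k W L : ℕ) : Set (ℝ → Fin k → ℝ) :=
  {f | ∃ g ∈ NNSet 1 k W L, f = fun t => g (fun _ => t)}

/-- Norm-constrained networks `NN_{1,1}(W, L, K)`, viewed as maps `ℝ → ℝ`. -/
def NNRealScalarNorm (W L : ℕ) (K : ℝ) : Set (ℝ → ℝ) :=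
  {f | ∃ g ∈ NNSetNorm 1 1 W L K, f = fun t => g (fun _ => t) 0}

/-- The class `S^d(x₀, …, x_{N+1})` of continuous piecewise linear functions `ℝ → ℝ^d`
with breakpoints among `x₀ < x₁ < ⋯ < x_{N+1}`, constant on `(-∞, x₀]` and `[x_{N+1}, ∞)`. -/
def CPwLClass (d N : ℕ) (x : ℕ → ℝ) : Set (ℝ → Fin d → ℝ) :=
  {f | Continuous f ∧
    (∀ t ≤ x 0, f t = f (x 0)) ∧
    (∀ t, x (N + 1) ≤ t → f t = f (x (N + 1))) ∧
    (∀ i ≤ N, ∃ a b : Fin d → ℝ, ∀ t ∈ Set.Icc (x i) (x (i + 1)),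
      f t = fun j => a j * t + b j)}

namespace S4
noncomputable section

lemma relu_nonneg (x : ℝ) : 0 ≤ relu x := le_max_right _ _
lemma relu_of_nonneg {x : ℝ} (h : 0 ≤ x) : relu x = x := max_eq_left h
lemma relu_of_nonpos {x : ℝ} (h : x ≤ 0) : relu x = 0 := max_eq_right h
lemma relu_mono {a b : ℝ} (h : a ≤ b) : relu a ≤ relu b := max_le_max h le_rfl
lemma relu_relu (x : ℝ) : relu (relu x) = relu x := relu_of_nonneg (relu_nonneg x)
lemma relu_zero : relu 0 = 0 := relu_of_nonpos le_rfl
lemma relu_const_mul {c : ℝ} (hc : 0 ≤ c) (x : ℝ) : relu (c * x) = c * relu x := by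
  rcases le_total x 0 with h | h
  · rw [relu_of_nonpos h, relu_of_nonpos (mul_nonpos_of_nonneg_of_nonpos hc h), mul_zero]
  · rw [relu_of_nonneg h, relu_of_nonneg (mul_nonneg hc h)]

/-- Carrying a clipped coordinate through a ReLU layer. -/
lemma relu_shift {t X0 a : ℝ} (h : X0 ≤ a) :
    relu (relu (t - X0) + (X0 - a)) = relu (t - a) := by
  rcases le_total t X0 with h1 | h1
  · rw [relu_of_nonpos (show t - X0 ≤ 0 by linarith), zero_add,
      relu_of_nonpos (show X0 - a ≤ 0 by linarith),
      relu_of_nonpos (show t - a ≤ 0 by linarith)]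
  · rw [relu_of_nonneg (show (0:ℝ) ≤ t - X0 by linarith),
      show t - X0 + (X0 - a) = t - a by ring]

/-- Kink representation of a CPwL function. -/
lemma kink_rep {d N : ℕ} {x : ℕ → ℝ} {f : ℝ → Fin d → ℝ}
    (hx : ∀ i ≤ N, x i < x (i + 1)) (hf : f ∈ CPwLClass d N x) :
    ∃ κ : ℕ → Fin d → ℝ, ∀ t, ∀ ν,
      f t ν = f (x 0) ν + ∑ q ∈ Finset.range (N + 2), κ q ν * relu (t - x q) := by
  obtain ⟨-, hleft, hright, hpiece⟩ := hf
  choose a b hab using hpiece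
  -- total slope function
  set A : ℕ → Fin d → ℝ := fun i ν => if h : i ≤ N then a i h ν else 0 with hA
  have habA : ∀ i (h : i ≤ N), ∀ t ∈ Set.Icc (x i) (x (i + 1)), ∀ ν,
      f t ν = A i ν * t + b i h ν := by
    intro i h t ht ν
    have := hab i h t ht
    simp only [hA, dif_pos h]
    exact congrFun this ν
  -- monotone nodes
  have xmono : ∀ i j, i ≤ j → j ≤ N + 1 → x i ≤ x j := by
    intro i j hij hj
    induction j with
    | zero => simp_all
    | succ n ih =>
      rcases Nat.lt_or_ge i (n + 1) with h1 | h1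
      · have hn : n ≤ N := by omega
        exact le_trans (ih (by omega) (by omega)) (le_of_lt (hx n hn))
      · have : i = n + 1 := by omega
        simp [this]
  refine ⟨fun q ν => if q = 0 then A 0 ν else if q ≤ N then A q ν - A (q - 1) ν
      else if q = N + 1 then -A N ν else 0, ?_⟩
  set κ : ℕ → Fin d → ℝ := fun q ν => if q = 0 then A 0 ν else if q ≤ N then A q ν - A (q - 1) ν
      else if q = N + 1 then -A N ν else 0 with hκ
  have tele : ∀ i, i ≤ N → ∀ ν, ∑ q ∈ Finset.range (i + 1), κ q ν = A i ν := by
    intro i hi ν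
    induction i with
    | zero => simp [hκ]
    | succ n ih =>
      rw [Finset.sum_range_succ, ih (by omega)]
      have h1 : ¬(n + 1 = 0) := by omega
      simp only [hκ, h1, if_false, if_pos hi]
      simp
  have teleAll : ∀ ν, ∑ q ∈ Finset.range (N + 2), κ q ν = 0 := by
    intro ν
    have : N + 2 = (N + 1) + 1 := rfl
    rw [this, Finset.sum_range_succ, tele N le_rfl ν]
    have h1 : ¬(N + 1 = 0) := by omega
    have h2 : ¬(N + 1 ≤ N) := by omega
    simp [hκ, h1, h2]
  set g : ℝ → Fin d → ℝ := fun t ν =>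
    f (x 0) ν + ∑ q ∈ Finset.range (N + 2), κ q ν * relu (t - x q) with hg
  -- main claim by induction on intervals
  have claim : ∀ i, i ≤ N + 1 → ∀ t, t ≤ x i → ∀ ν, f t ν = g t ν := by
    intro i
    induction i with
    | zero =>
      intro _ t ht ν
      rw [hleft t ht]
      have : ∀ q ∈ Finset.range (N + 2), κ q ν * relu (t - x q) = 0 := by
        intro q hq
        rw [relu_of_nonpos (by
          have := xmono 0 q (by omega) (by simp at hq; omega)
          linarith), mul_zero]
      simp [hg, Finset.sum_congr rfl this]
    | succ n ih =>
      intro hn1 t ht ν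
      have hnN : n ≤ N := by omega
      rcases le_total t (x n) with h1 | h1
      · exact ih (by omega) t h1 ν
      · -- x n ≤ t ≤ x (n+1)
        have hfx : f (x n) ν = g (x n) ν := ih (by omega) (x n) le_rfl ν
        have e1 : f t ν = A n ν * t + b n hnN ν := habA n hnN t ⟨h1, ht⟩ ν
        have e2 : f (x n) ν = A n ν * x n + b n hnN ν :=
          habA n hnN (x n) ⟨le_rfl, le_of_lt (hx n hnN)⟩ ν
        have e3 : g t ν - g (x n) ν = (∑ q ∈ Finset.range (n + 1), κ q ν) * (t - x n) := by
          simp only [hg]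
          rw [add_sub_add_left_eq_sub, ← Finset.sum_sub_distrib, Finset.sum_mul]
          have hsplit : Finset.range (N + 2) =
              Finset.range (n + 1) ∪ Finset.Ico (n + 1) (N + 2) := by
            simp only [Finset.range_eq_Ico]
            exact (Finset.Ico_union_Ico_eq_Ico (by omega) (by omega)).symm
          rw [hsplit, Finset.sum_union (by
            rw [Finset.range_eq_Ico]
            exact Finset.Ico_disjoint_Ico_consecutive 0 (n+1) (N+2))]
          have hz : ∑ q ∈ Finset.Ico (n + 1) (N + 2),
              (κ q ν * relu (t - x q) - κ q ν * relu (x n - x q)) = 0 := by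
            apply Finset.sum_eq_zero
            intro q hq
            simp only [Finset.mem_Ico] at hq
            have hq1 : x (n+1) ≤ x q := xmono (n+1) q hq.1 (by omega)
            have hq2 : x n ≤ x q := xmono n q (by omega) (by omega)
            rw [relu_of_nonpos (by linarith), relu_of_nonpos (by linarith)]
            ring
          rw [hz, add_zero]
          apply Finset.sum_congr rfl
          intro q hq
          simp only [Finset.mem_range] at hq
          have hq1 : x q ≤ x n := xmono q n (by omega) (by omega)
          rw [relu_of_nonneg (by linarith), relu_of_nonneg (by linarith)]
          ring
        rw [tele n hnN ν] at e3
        have : f t ν - f (x n) ν = A n ν * (t - x n) := by rw [e1, e2]; ring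
        linarith [hfx, e3, this]
  intro t ν
  rcases le_total t (x (N + 1)) with h | h
  · exact claim (N + 1) le_rfl t h ν
  · have hfix : f (x (N+1)) ν = g (x (N+1)) ν := claim (N + 1) le_rfl (x (N+1)) le_rfl ν
    have e3 : g t ν - g (x (N+1)) ν = 0 := by
      simp only [hg]
      rw [add_sub_add_left_eq_sub, ← Finset.sum_sub_distrib]
      have : ∀ q ∈ Finset.range (N + 2), κ q ν * relu (t - x q) - κ q ν * relu (x (N+1) - x q)
          = κ q ν * (t - x (N+1)) := by
        intro q hq
        simp only [Finset.mem_range] at hq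
        have hq1 : x q ≤ x (N+1) := xmono q (N+1) (by omega) (by omega)
        rw [relu_of_nonneg (by linarith), relu_of_nonneg (by linarith)]
        ring
      rw [Finset.sum_congr rfl this, ← Finset.sum_mul, teleAll, zero_mul]
    have : f t ν = g t ν := by rw [hright t h]; linarith [hfix, e3]
    exact this


/-- Size of one block's index window. -/
def DD (W k : ℕ) : ℕ := (W - 3) * (k + 1) + 3

/-- Offset of the `p`-th boundary node within a block window. -/
def offB (W k p : ℕ) : ℕ :=
  if p = 0 then 0 else if p ≤ W - 2 then 1 + (p - 1) * (k + 1) else DD W k - 1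

/-- Offset of the `j`-th interior node of group `p` within a block window. -/
def offI (W k p j : ℕ) : ℕ := 2 + (p - 1) * (k + 1) + j

lemma sum_range_mul {M : Type*} [AddCommMonoid M] (a b : ℕ) (G : ℕ → M) :
    ∑ e ∈ range (a * b), G e = ∑ i ∈ range a, ∑ r ∈ range b, G (i * b + r) := by
  induction a with
  | zero => simp
  | succ n ih =>
    have h1 : (n + 1) * b = n * b + b := by ring
    rw [h1, Finset.sum_range_add, ih, Finset.sum_range_succ]

section Offs
variable {W k : ℕ}

lemma offB_zero : offB W k 0 = 0 := by unfold offB; simp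

lemma offB_succ_eq {i : ℕ} (hW : 6 ≤ W) (hi : i + 1 ≤ W - 2) :
    offB W k (i + 1) = i * (k + 1) + 1 := by
  unfold offB
  rw [if_neg (Nat.succ_ne_zero i), if_pos hi]
  simp only [Nat.add_sub_cancel]
  omega

lemma offB_last_eq (hW : 6 ≤ W) :
    offB W k (W - 1) = (W - 3) * (k + 1) + 2 := by
  obtain ⟨m, hm⟩ : ∃ m, W = m + 3 := ⟨W - 3, by omega⟩
  subst hm
  unfold offB DD
  have h1 : ¬ (m + 3 - 1 = 0) := by omega
  have h2 : ¬ (m + 3 - 1 ≤ m + 3 - 2) := by omega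
  simp only [h1, if_false, h2, Nat.add_sub_cancel]
  omega

lemma offI_eq {i j : ℕ} : offI W k (i + 1) j = i * (k + 1) + j + 2 := by
  unfold offI
  simp only [Nat.add_sub_cancel]
  omega

lemma offB_lt_offB (hW : 6 ≤ W) {p q : ℕ} (hpq : p < q) (hq : q ≤ W - 1) :
    offB W k p < offB W k q := by
  obtain ⟨m, hm⟩ : ∃ m, W = m + 3 := ⟨W - 3, by omega⟩
  subst hm
  rcases Nat.eq_zero_or_pos q with h | h
  · omega
  · obtain ⟨q', rfl⟩ : ∃ q', q = q' + 1 := ⟨q - 1, by omega⟩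
    have hq2 : ∀ r, offB (m + 3) k (r + 1) = if r + 1 ≤ m + 1 then r * (k + 1) + 1
        else m * (k + 1) + 2 := by
      intro r
      by_cases hr : r + 1 ≤ m + 1
      · rw [if_pos hr, offB_succ_eq hW (by omega)]
      · rw [if_neg hr]
        unfold offB DD
        have h1 : ¬ (r + 1 = 0) := by omega
        have h2 : ¬ (r + 1 ≤ m + 3 - 2) := by omega
        simp only [h1, if_false, h2, Nat.add_sub_cancel]
        omega
    rcases Nat.eq_zero_or_pos p with hp | hp
    · subst hp
      rw [offB_zero, hq2 q']
      split <;> omega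
    · obtain ⟨p', rfl⟩ : ∃ p', p = p' + 1 := ⟨p - 1, by omega⟩
      rw [hq2 p', hq2 q']
      have hq' : q' + 1 ≤ m + 1 ∨ q' + 1 = m + 2 := by omega
      have key : p' * (k + 1) + (k + 1) ≤ q' * (k + 1) ∨ (p' ≤ m ∧ q' = m + 1) := by
        rcases hq' with h | h
        · left
          have : p' + 1 ≤ q' := by omega
          calc p' * (k + 1) + (k + 1) = (p' + 1) * (k + 1) := by ring
          _ ≤ q' * (k + 1) := Nat.mul_le_mul_right _ this
        · right; omega
      have hmono : p' * (k + 1) ≤ m * (k + 1) := Nat.mul_le_mul_right _ (by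
        rcases key with h | h
        · by_cases hh : p' ≤ m
          · exact hh
          · exfalso
            have : q' ≤ m + 1 := by omega
            have := Nat.mul_le_mul_right (k + 1) this
            have h3 := Nat.mul_le_mul_right (k + 1) (show m + 1 ≤ p' by omega)
            have h4 : (m + 1) * (k + 1) = m * (k + 1) + (k + 1) := by ring
            have h5 : (m + 1) * (k+1) ≥ q' * (k+1) := Nat.mul_le_mul_right _ (by omega)
            omega
        · omega)
      rcases key with h | h
      · have hle : q' ≤ m + 1 := by
          by_contra hh
          have := Nat.mul_le_mul_right (k + 1) (show q' ≤ m + 1 by omega)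
          omega
        have hq'm : q' * (k + 1) ≤ (m + 1) * (k + 1) := Nat.mul_le_mul_right _ hle
        have h4 : (m + 1) * (k + 1) = m * (k + 1) + (k + 1) := by ring
        split <;> split <;> omega
      · obtain ⟨h1, h2⟩ := h
        subst h2
        have : ¬ (m + 1 + 1 ≤ m + 1) := by omega
        rw [if_neg this, if_pos (by omega)]
        omega

lemma offB_lt_offI (hW : 6 ≤ W) {p j : ℕ} (hp1 : 1 ≤ p) (hp2 : p ≤ W - 2) :
    offB W k p < offI W k p j := by
  obtain ⟨p', rfl⟩ : ∃ p', p = p' + 1 := ⟨p - 1, by omega⟩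
  rw [offB_succ_eq hW hp2, offI_eq]
  omega

lemma offI_lt_offB (hW : 6 ≤ W) {p j : ℕ} (hp1 : 1 ≤ p) (hp2 : p ≤ W - 3) (hj : j < k) :
    offI W k p j < offB W k (p + 1) := by
  obtain ⟨p', rfl⟩ : ∃ p', p = p' + 1 := ⟨p - 1, by omega⟩
  rw [offI_eq, offB_succ_eq hW (by omega)]
  have : (p' + 1) * (k + 1) = p' * (k + 1) + (k + 1) := by ring
  omega

lemma offB_lt_DD (hW : 6 ≤ W) {p : ℕ} (hp : p ≤ W - 1) : offB W k p < DD W k := by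
  obtain ⟨m, hm⟩ : ∃ m, W = m + 3 := ⟨W - 3, by omega⟩
  subst hm
  rcases Nat.eq_zero_or_pos p with h | h
  · rw [h, offB_zero]; unfold DD; omega
  · obtain ⟨p', rfl⟩ : ∃ p', p = p' + 1 := ⟨p - 1, by omega⟩
    unfold DD
    simp only [Nat.add_sub_cancel]
    by_cases hh : p' + 1 ≤ m + 1
    · rw [offB_succ_eq hW (by omega)]
      have : p' * (k + 1) ≤ m * (k + 1) := Nat.mul_le_mul_right _ (by omega)
      omega
    · unfold offB DD
      have h1 : ¬ (p' + 1 = 0) := by omega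
      have h2 : ¬ (p' + 1 ≤ m + 3 - 2) := by omega
      simp only [h1, if_false, h2, Nat.add_sub_cancel]
      have : m * (k + 1) ≥ 0 := Nat.zero_le _
      omega

lemma offI_lt_DD (hW : 6 ≤ W) {p j : ℕ} (hp1 : 1 ≤ p) (hp2 : p ≤ W - 3) (hj : j < k) :
    offI W k p j < DD W k :=
  lt_trans (offI_lt_offB hW hp1 hp2 hj) (offB_lt_DD hW (by omega))

/-- The partition of a block window into boundary and interior offsets. -/
lemma part_sum {M : Type*} [AddCommMonoid M] (hW : 6 ≤ W) (F : ℕ → M) :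
    ∑ e ∈ range (DD W k), F e =
      (∑ p ∈ range W, F (offB W k p)) +
        ∑ p ∈ Finset.Ico 1 (W - 2), ∑ j ∈ range k, F (offI W k p j) := by
  obtain ⟨m, hm⟩ : ∃ m, W = m + 3 := ⟨W - 3, by omega⟩
  subst hm
  have hDD : DD (m + 3) k = m * (k + 1) + 3 := by unfold DD; simp [Nat.add_sub_cancel]
  have lhs1 : ∑ e ∈ range (DD (m + 3) k), F e =
      ((∑ i ∈ range m, ∑ r ∈ range (k + 1), F (i * (k + 1) + r + 1)) + F 0)
        + F (m * (k + 1) + 1) + F (m * (k + 1) + 2) := by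
    rw [hDD, show m * (k + 1) + 3 = (m * (k + 1) + 2) + 1 from rfl, Finset.sum_range_succ,
      show m * (k + 1) + 2 = (m * (k + 1) + 1) + 1 from rfl, Finset.sum_range_succ,
      Finset.sum_range_succ', sum_range_mul m (k + 1) (fun e => F (e + 1))]
  have lhs2 : ∀ i ∈ range m, ∑ r ∈ range (k + 1), F (i * (k + 1) + r + 1) =
      (∑ j ∈ range k, F (i * (k + 1) + (j + 1) + 1)) + F (i * (k + 1) + 1) := by
    intro i _
    rw [Finset.sum_range_succ']
  have rhs1 : ∑ p ∈ range (m + 3), F (offB (m + 3) k p) =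
      ((∑ i ∈ range m, F (i * (k + 1) + 1)) + F 0) + F (m * (k + 1) + 1)
        + F (m * (k + 1) + 2) := by
    have e1 : F (offB (m + 3) k (m + 1 + 1)) = F (m * (k + 1) + 2) := by
      have h2 : m + 1 + 1 = m + 3 - 1 := by omega
      rw [h2, offB_last_eq (by omega)]
      simp only [Nat.add_sub_cancel]
    have e2 : F (offB (m + 3) k (m + 1)) = F (m * (k + 1) + 1) := by
      rw [offB_succ_eq (by omega) (by omega)]
    have e3 : F (offB (m + 3) k 0) = F 0 := by rw [offB_zero]
    have e4 : ∀ i ∈ range m, F (offB (m + 3) k (i + 1)) = F (i * (k + 1) + 1) := by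
      intro i hi
      rw [offB_succ_eq (by omega) (by simp at hi; omega)]
    rw [show m + 3 = (m + 1 + 1) + 1 by omega, Finset.sum_range_succ,
      Finset.sum_range_succ, Finset.sum_range_succ', e1, e2, e3,
      Finset.sum_congr rfl e4]
  have rhs2 : ∑ p ∈ Finset.Ico 1 (m + 3 - 2), ∑ j ∈ range k, F (offI (m + 3) k p j) =
      ∑ i ∈ range m, ∑ j ∈ range k, F (i * (k + 1) + (j + 1) + 1) := by
    have h1 : m + 3 - 2 = m + 1 := by omega
    rw [h1, Finset.sum_Ico_eq_sum_range]
    apply Finset.sum_congr (by congr 1)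
    intro i _
    apply Finset.sum_congr rfl
    intro j _
    rw [show 1 + i = i + 1 by omega, offI_eq]
    try exact congrArg F (by omega)
  rw [lhs1, Finset.sum_congr rfl lhs2, rhs1, rhs2, Finset.sum_add_distrib]
  abel

end Offs

/-! ### N-shapes and hats -/

lemma relu_Nshape (t0 t1 y t2 t3 s m1 m3 t : ℝ)
    (h01 : t0 < t1) (h1y : t1 < y) (hy2 : y < t2) (h23 : t2 < t3) (hs : 0 ≤ s)
    (hm1 : m1 * (t1 - t0) = -(s * (y - t1)))
    (hm3 : m3 * (t3 - t2) = -(s * (t2 - y))) :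
    relu (m1 * relu (t - t0) + (s - m1) * relu (t - t1) + (m3 - s) * relu (t - t2)
      + (-m3) * relu (t - t3))
      = s * relu (t - y) + (m3 - s) * relu (t - t2) + (-m3) * relu (t - t3) := by
  have hm1' : m1 ≤ 0 := by nlinarith
  have hm3' : m3 ≤ 0 := by nlinarith
  rcases le_total t t0 with c1 | c1
  · rw [relu_of_nonpos (show t - t0 ≤ 0 by linarith),
      relu_of_nonpos (show t - t1 ≤ 0 by linarith),
      relu_of_nonpos (show t - t2 ≤ 0 by linarith),
      relu_of_nonpos (show t - t3 ≤ 0 by linarith),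
      relu_of_nonpos (show t - y ≤ 0 by linarith),
      show m1 * 0 + (s - m1) * 0 + (m3 - s) * 0 + (-m3) * 0 = 0 by ring, relu_zero]
    ring
  · rcases le_total t t1 with c2 | c2
    · rw [relu_of_nonneg (show 0 ≤ t - t0 by linarith),
        relu_of_nonpos (show t - t1 ≤ 0 by linarith),
        relu_of_nonpos (show t - t2 ≤ 0 by linarith),
        relu_of_nonpos (show t - t3 ≤ 0 by linarith),
        relu_of_nonpos (show t - y ≤ 0 by linarith),
        show m1 * (t - t0) + (s - m1) * 0 + (m3 - s) * 0 + (-m3) * 0 = m1 * (t - t0) by ring,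
        relu_of_nonpos (mul_nonpos_of_nonpos_of_nonneg hm1' (by linarith))]
      ring
    · rcases le_total t y with c3 | c3
      · rw [relu_of_nonneg (show 0 ≤ t - t0 by linarith),
          relu_of_nonneg (show 0 ≤ t - t1 by linarith),
          relu_of_nonpos (show t - t2 ≤ 0 by linarith),
          relu_of_nonpos (show t - t3 ≤ 0 by linarith),
          relu_of_nonpos (show t - y ≤ 0 by linarith),
          show m1 * (t - t0) + (s - m1) * (t - t1) + (m3 - s) * 0 + (-m3) * 0
            = s * (t - y) + (m1 * (t1 - t0) + s * (y - t1)) by ring,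
          show m1 * (t1 - t0) + s * (y - t1) = 0 by linarith,
          add_zero, relu_of_nonpos (mul_nonpos_of_nonneg_of_nonpos hs (by linarith))]
        ring
      · rcases le_total t t2 with c4 | c4
        · rw [relu_of_nonneg (show 0 ≤ t - t0 by linarith),
            relu_of_nonneg (show 0 ≤ t - t1 by linarith),
            relu_of_nonpos (show t - t2 ≤ 0 by linarith),
            relu_of_nonpos (show t - t3 ≤ 0 by linarith),
            relu_of_nonneg (show 0 ≤ t - y by linarith),
            show m1 * (t - t0) + (s - m1) * (t - t1) + (m3 - s) * 0 + (-m3) * 0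
              = s * (t - y) + (m1 * (t1 - t0) + s * (y - t1)) by ring,
            show m1 * (t1 - t0) + s * (y - t1) = 0 by linarith,
            add_zero, relu_of_nonneg (mul_nonneg hs (by linarith))]
          ring
        · rcases le_total t t3 with c5 | c5
          · rw [relu_of_nonneg (show 0 ≤ t - t0 by linarith),
              relu_of_nonneg (show 0 ≤ t - t1 by linarith),
              relu_of_nonneg (show 0 ≤ t - t2 by linarith),
              relu_of_nonpos (show t - t3 ≤ 0 by linarith),
              relu_of_nonneg (show 0 ≤ t - y by linarith),
              show m1 * (t - t0) + (s - m1) * (t - t1) + (m3 - s) * (t - t2) + (-m3) * 0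
                = (s * (t2 - y) + m3 * (t - t2)) + (m1 * (t1 - t0) + s * (y - t1)) by ring,
              show m1 * (t1 - t0) + s * (y - t1) = 0 by linarith, add_zero]
            have hpos : 0 ≤ s * (t2 - y) + m3 * (t - t2) := by nlinarith
            rw [relu_of_nonneg hpos]
            ring
          · rw [relu_of_nonneg (show 0 ≤ t - t0 by linarith),
              relu_of_nonneg (show 0 ≤ t - t1 by linarith),
              relu_of_nonneg (show 0 ≤ t - t2 by linarith),
              relu_of_nonneg (show 0 ≤ t - t3 by linarith),
              relu_of_nonneg (show 0 ≤ t - y by linarith)]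
            have harg : m1 * (t - t0) + (s - m1) * (t - t1) + (m3 - s) * (t - t2)
                + (-m3) * (t - t3) = 0 := by linear_combination hm1 + hm3
            rw [harg, relu_zero]
            linear_combination - hm3

lemma Nshape_zero_left (t0 t1 y t2 t3 s m1 m3 t : ℝ) (h01 : t0 < t1)
    (h1y : t1 < y) (hy2 : y < t2) (h23 : t2 < t3) (ht : t ≤ t0) :
    m1 * relu (t - t0) + (s - m1) * relu (t - t1) + (m3 - s) * relu (t - t2)
      + (-m3) * relu (t - t3) = 0 := by
  rw [relu_of_nonpos (show t - t0 ≤ 0 by linarith),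
    relu_of_nonpos (show t - t1 ≤ 0 by linarith),
    relu_of_nonpos (show t - t2 ≤ 0 by linarith),
    relu_of_nonpos (show t - t3 ≤ 0 by linarith)]
  ring

lemma Nshape_zero_right (t0 t1 y t2 t3 s m1 m3 t : ℝ)
    (h01 : t0 < t1) (h1y : t1 < y) (hy2 : y < t2) (h23 : t2 < t3) (ht : t3 ≤ t)
    (hm1 : m1 * (t1 - t0) = -(s * (y - t1)))
    (hm3 : m3 * (t3 - t2) = -(s * (t2 - y))) :
    m1 * relu (t - t0) + (s - m1) * relu (t - t1) + (m3 - s) * relu (t - t2)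
      + (-m3) * relu (t - t3) = 0 := by
  rw [relu_of_nonneg (show 0 ≤ t - t0 by linarith),
    relu_of_nonneg (show 0 ≤ t - t1 by linarith),
    relu_of_nonneg (show 0 ≤ t - t2 by linarith),
    relu_of_nonneg (show 0 ≤ t - t3 by linarith)]
  linear_combination hm1 + hm3

/-- `relu` distributes over a sum of which at most one term is nonzero. -/
lemma relu_sum_pairwise {S : Finset ℕ} {g : ℕ → ℝ}
    (h : ∀ p ∈ S, ∀ q ∈ S, p ≠ q → g p = 0 ∨ g q = 0) :
    relu (∑ p ∈ S, g p) = ∑ p ∈ S, relu (g p) := by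
  induction S using Finset.induction_on with
  | empty => simp [relu_zero]
  | @insert a s ha ih =>
    rw [Finset.sum_insert ha, Finset.sum_insert ha]
    by_cases hga : g a = 0
    · rw [hga, zero_add, relu_zero, zero_add]
      exact ih (fun p hp q hq hpq => h p (Finset.mem_insert_of_mem hp)
        q (Finset.mem_insert_of_mem hq) hpq)
    · have hz : ∀ q ∈ s, g q = 0 := by
        intro q hq
        rcases h a (Finset.mem_insert_self a s) q (Finset.mem_insert_of_mem hq)
          (by rintro rfl; exact ha hq) with h' | h'
        · exact absurd h' hga
        · exact h'
      rw [Finset.sum_eq_zero hz, Finset.sum_eq_zero (fun q hq => by rw [hz q hq, relu_zero]),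
        add_zero, add_zero]

/-! ### Construction data -/

structure Dat where
  W : ℕ
  k : ℕ
  d : ℕ
  X : ℕ → ℝ
  dom : ℕ → ℕ → ℝ

namespace Dat
variable (S : Dat)

def D : ℕ := DD S.W S.k
def bnd (l p : ℕ) : ℕ := l * S.D + offB S.W S.k p
def inti (l p j : ℕ) : ℕ := l * S.D + offI S.W S.k p j
def pB (l p : ℕ) : ℝ := S.X (S.bnd l p)
def pI (l p j : ℕ) : ℝ := S.X (S.inti l p j)
def kv (l p j ν : ℕ) : ℝ := S.dom (S.inti l p j) ν
def amp (l p j ν sg : ℕ) : ℝ :=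
  if sg = 0 then max (S.kv l p j ν) 0 else max (-S.kv l p j ν) 0
def sgv (sg : ℕ) : ℝ := if sg = 0 then 1 else -1
def m1 (l p j ν sg : ℕ) : ℝ :=
  -(S.amp l p j ν sg * (S.pI l p j - S.pB l p)) / (S.pB l p - S.pB l (p - 1))
def m3 (l p j ν sg : ℕ) : ℝ :=
  -(S.amp l p j ν sg * (S.pB l (p + 1) - S.pI l p j)) / (S.pB l (p + 2) - S.pB l (p + 1))
def Nsh (l p j ν sg : ℕ) (t : ℝ) : ℝ :=
  S.m1 l p j ν sg * relu (t - S.pB l (p - 1))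
    + (S.amp l p j ν sg - S.m1 l p j ν sg) * relu (t - S.pB l p)
    + (S.m3 l p j ν sg - S.amp l p j ν sg) * relu (t - S.pB l (p + 1))
    + (-S.m3 l p j ν sg) * relu (t - S.pB l (p + 2))
def hatF (l p j ν sg : ℕ) (t : ℝ) : ℝ :=
  S.amp l p j ν sg * relu (t - S.pI l p j)
    + (S.m3 l p j ν sg - S.amp l p j ν sg) * relu (t - S.pB l (p + 1))
    + (-S.m3 l p j ν sg) * relu (t - S.pB l (p + 2))

def hostsAll : Finset ℕ := Finset.Ico 1 (S.W - 2)
def hosts (r : ℕ) : Finset ℕ := S.hostsAll.filter (fun p => p % 3 = r)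

def jOf (w : ℕ) : ℕ := w / (6 * S.d)
def nuOf (w : ℕ) : ℕ := (w / 6) % S.d
def rOf (w : ℕ) : ℕ := (w / 2) % 3
def sgOf (w : ℕ) : ℕ := w % 2

def laneCoef (l w p' : ℕ) : ℝ :=
  ∑ p ∈ S.hosts (rOf w),
    ((if p' = p - 1 then S.m1 l p (S.jOf w) (S.nuOf w) (sgOf w) else 0)
      + (if p' = p then S.amp l p (S.jOf w) (S.nuOf w) (sgOf w)
          - S.m1 l p (S.jOf w) (S.nuOf w) (sgOf w) else 0)
      + (if p' = p + 1 then S.m3 l p (S.jOf w) (S.nuOf w) (sgOf w)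
          - S.amp l p (S.jOf w) (S.nuOf w) (sgOf w) else 0)
      + (if p' = p + 2 then -S.m3 l p (S.jOf w) (S.nuOf w) (sgOf w) else 0))

def laneVal (l w : ℕ) (t : ℝ) : ℝ :=
  ∑ p ∈ S.hosts (rOf w), S.hatF l p (S.jOf w) (S.nuOf w) (sgOf w) t

def outw (w ν : ℕ) : ℝ :=
  if w < 6 * S.d * S.k ∧ S.nuOf w = ν then sgv (sgOf w) else 0

def spill (l p ν : ℕ) : ℝ :=
  ∑ q ∈ S.hostsAll, ∑ j ∈ range S.k, ∑ sg ∈ range 2, sgv sg *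
    ((if p = q + 1 then S.m3 l q j ν sg - S.amp l q j ν sg else 0)
      + (if p = q + 2 then -S.m3 l q j ν sg else 0))

def cB (l p ν : ℕ) : ℝ := S.dom (S.bnd l p) ν - S.spill l p ν

def Bv (l ν : ℕ) (t : ℝ) : ℝ :=
  (∑ p ∈ range S.W, S.cB l p ν * relu (t - S.pB l p))
    + ∑ w ∈ range S.W, S.outw w ν * S.laneVal l w t

structure Good (S : Dat) : Prop where
  hW : 6 ≤ S.W
  hd : 1 ≤ S.d
  hk : 1 ≤ S.k
  hdk : 6 * S.d * S.k ≤ S.W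
  mono : StrictMono S.X

variable {S}

lemma mem_hostsAll {p : ℕ} (hp : p ∈ S.hostsAll) : 1 ≤ p ∧ p + 2 ≤ S.W - 1 := by
  simp only [hostsAll, Finset.mem_Ico] at hp
  omega

lemma mem_hosts {r p : ℕ} (hp : p ∈ S.hosts r) : p ∈ S.hostsAll ∧ p % 3 = r := by
  simp only [hosts, Finset.mem_filter] at hp
  exact hp

lemma pB_lt_pB (G : Good S) {l p q : ℕ} (hpq : p < q) (hq : q ≤ S.W - 1) :
    S.pB l p < S.pB l q :=
  G.mono (by exact Nat.add_lt_add_left (offB_lt_offB G.hW hpq hq) _)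

lemma pB_le_pB (G : Good S) {l p q : ℕ} (hpq : p ≤ q) (hq : q ≤ S.W - 1) :
    S.pB l p ≤ S.pB l q := by
  rcases Nat.eq_or_lt_of_le hpq with h | h
  · rw [h]
  · exact le_of_lt (pB_lt_pB G h hq)

lemma pB_lt_pI (G : Good S) {l p j : ℕ} (hp1 : 1 ≤ p) (hp2 : p ≤ S.W - 2) :
    S.pB l p < S.pI l p j :=
  G.mono (by exact Nat.add_lt_add_left (offB_lt_offI G.hW hp1 hp2) _)

lemma pI_lt_pB (G : Good S) {l p j : ℕ} (hp1 : 1 ≤ p) (hp2 : p ≤ S.W - 3) (hj : j < S.k) :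
    S.pI l p j < S.pB l (p + 1) :=
  G.mono (by exact Nat.add_lt_add_left (offI_lt_offB G.hW hp1 hp2 hj) _)

lemma amp_nonneg (l p j ν sg : ℕ) : 0 ≤ S.amp l p j ν sg := by
  unfold amp; split <;> exact le_max_right _ _

/-- Ordering facts for a host group. -/
lemma host_ord (G : Good S) {p : ℕ} (hp : p ∈ S.hostsAll) {j : ℕ} (hj : j < S.k) (l : ℕ) :
    S.pB l (p - 1) < S.pB l p ∧ S.pB l p < S.pI l p j ∧ S.pI l p j < S.pB l (p + 1)
      ∧ S.pB l (p + 1) < S.pB l (p + 2) := by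
  obtain ⟨h1, h2⟩ := mem_hostsAll hp
  have hW := G.hW
  exact ⟨pB_lt_pB G (by omega) (by omega), pB_lt_pI G h1 (by omega),
    pI_lt_pB G h1 (by omega) hj, pB_lt_pB G (by omega) (by omega)⟩

lemma m1_spec (G : Good S) {p : ℕ} (hp : p ∈ S.hostsAll) {j : ℕ} (hj : j < S.k)
    (l ν sg : ℕ) :
    S.m1 l p j ν sg * (S.pB l p - S.pB l (p - 1))
      = -(S.amp l p j ν sg * (S.pI l p j - S.pB l p)) := by
  have h := (host_ord G hp hj l).1
  exact div_mul_cancel₀ _ (by linarith [sub_ne_zero.mpr (ne_of_gt h)]; )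

lemma m3_spec (G : Good S) {p : ℕ} (hp : p ∈ S.hostsAll) {j : ℕ} (hj : j < S.k)
    (l ν sg : ℕ) :
    S.m3 l p j ν sg * (S.pB l (p + 2) - S.pB l (p + 1))
      = -(S.amp l p j ν sg * (S.pB l (p + 1) - S.pI l p j)) := by
  have h := (host_ord G hp hj l).2.2.2
  exact div_mul_cancel₀ _ (sub_ne_zero.mpr (ne_of_gt h))

lemma sum_single {W a : ℕ} (ha : a < W) (c : ℝ) (f : ℕ → ℝ) :
    ∑ p' ∈ range W, (if p' = a then c else 0) * f p' = c * f a := by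
  have h1 : ∀ p' ∈ range W, (if p' = a then c else 0) * f p'
      = if p' = a then c * f a else 0 := by
    intro p' _
    by_cases h : p' = a
    · subst h; simp
    · simp [h]
  rw [Finset.sum_congr rfl h1, Finset.sum_ite_eq' (range W) a (fun _ => c * f a),
    if_pos (Finset.mem_range.mpr ha)]

/-- The key evaluation: a lane neuron computes its sum of hats. -/
lemma lane_eval (G : Good S) (l w : ℕ) (hj : S.jOf w < S.k) (t : ℝ) :
    relu (∑ p' ∈ range S.W, S.laneCoef l w p' * relu (t - S.pB l p'))
      = S.laneVal l w t := by
  set j := S.jOf w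
  set ν := S.nuOf w
  set sg := sgOf w
  set r := rOf w
  have step1 : ∑ p' ∈ range S.W, S.laneCoef l w p' * relu (t - S.pB l p')
      = ∑ p ∈ S.hosts r, S.Nsh l p j ν sg t := by
    unfold laneCoef
    rw [Finset.sum_congr rfl (fun p' _ => Finset.sum_mul _ _ _), Finset.sum_comm]
    apply Finset.sum_congr rfl
    intro p hp
    obtain ⟨hpa, -⟩ := mem_hosts hp
    obtain ⟨h1, h2⟩ := mem_hostsAll hpa
    have e : ∀ p' ∈ range S.W,
        ((if p' = p - 1 then S.m1 l p j ν sg else 0)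
          + (if p' = p then S.amp l p j ν sg - S.m1 l p j ν sg else 0)
          + (if p' = p + 1 then S.m3 l p j ν sg - S.amp l p j ν sg else 0)
          + (if p' = p + 2 then -S.m3 l p j ν sg else 0)) * relu (t - S.pB l p')
        = (if p' = p - 1 then S.m1 l p j ν sg else 0) * relu (t - S.pB l p')
          + (if p' = p then S.amp l p j ν sg - S.m1 l p j ν sg else 0) * relu (t - S.pB l p')
          + (if p' = p + 1 then S.m3 l p j ν sg - S.amp l p j ν sg else 0) * relu (t - S.pB l p')
          + (if p' = p + 2 then -S.m3 l p j ν sg else 0) * relu (t - S.pB l p') := by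
      intro p' _; ring
    rw [Finset.sum_congr rfl e]
    rw [Finset.sum_add_distrib, Finset.sum_add_distrib, Finset.sum_add_distrib]
    have hW := G.hW
    rw [sum_single (show p - 1 < S.W by omega), sum_single (show p < S.W by omega),
      sum_single (show p + 1 < S.W by omega), sum_single (show p + 2 < S.W by omega)]
    unfold Nsh
    ring
  rw [step1]
  have hdisj : ∀ p ∈ S.hosts r, ∀ q ∈ S.hosts r, p ≠ q →
      S.Nsh l p j ν sg t = 0 ∨ S.Nsh l q j ν sg t = 0 := by
    have key : ∀ p ∈ S.hosts r, ∀ q ∈ S.hosts r, p < q →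
        S.Nsh l p j ν sg t = 0 ∨ S.Nsh l q j ν sg t = 0 := by
      intro p hp q hq hpq
      obtain ⟨hpa, hpr⟩ := mem_hosts hp
      obtain ⟨hqa, hqr⟩ := mem_hosts hq
      obtain ⟨hp1, hp2⟩ := mem_hostsAll hpa
      obtain ⟨hq1, hq2⟩ := mem_hostsAll hqa
      have h3 : p + 3 ≤ q := by omega
      obtain ⟨o1, o2, o3, o4⟩ := host_ord G hpa hj l
      obtain ⟨o1', o2', o3', o4'⟩ := host_ord G hqa hj l
      rcases le_total t (S.pB l (p + 2)) with hc | hc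
      · right
        have hle : S.pB l (p + 2) ≤ S.pB l (q - 1) := pB_le_pB G (by omega) (by omega)
        exact Nshape_zero_left _ _ _ _ _ _ _ _ _ o1' o2' o3' o4' (by linarith)
      · left
        exact Nshape_zero_right _ _ _ _ _ _ _ _ _ o1 o2 o3 o4 hc
          (m1_spec G hpa hj l ν sg) (m3_spec G hpa hj l ν sg)
    intro p hp q hq hpq
    rcases Nat.lt_or_ge p q with h | h
    · exact key p hp q hq h
    · exact (key q hq p hp (by omega)).symm
  rw [relu_sum_pairwise hdisj]
  apply Finset.sum_congr rfl
  intro p hp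
  obtain ⟨hpa, -⟩ := mem_hosts hp
  obtain ⟨o1, o2, o3, o4⟩ := host_ord G hpa hj l
  exact relu_Nshape _ _ _ _ _ _ _ _ _ o1 o2 o3 o4 (amp_nonneg l p j ν sg)
    (m1_spec G hpa hj l ν sg) (m3_spec G hpa hj l ν sg)

end Dat

namespace Dat
variable {S : Dat}

lemma max_sub_max (a : ℝ) : max a 0 - max (-a) 0 = a := by
  rcases le_total a 0 with h | h
  · rw [max_eq_right h, max_eq_left (by linarith)]; ring
  · rw [max_eq_left h, max_eq_right (by linarith)]; ring

def enc (S : Dat) (j ν r sg : ℕ) : ℕ := ((j * S.d + ν) * 3 + r) * 2 + sg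

lemma dec_enc (G : Good S) {ν r sg : ℕ} (j : ℕ) (hν : ν < S.d) (hr : r < 3) (hsg : sg < 2) :
    S.jOf (S.enc j ν r sg) = j ∧ S.nuOf (S.enc j ν r sg) = ν
      ∧ rOf (S.enc j ν r sg) = r ∧ sgOf (S.enc j ν r sg) = sg := by
  have hd := G.hd
  have he : 6 * ν + 2 * r + sg < 6 * S.d := by omega
  have h1 : S.enc j ν r sg = 6 * S.d * j + (6 * ν + 2 * r + sg) := by unfold enc; ring
  refine ⟨?_, ?_, ?_, ?_⟩
  · unfold jOf
    rw [h1, Nat.mul_add_div (by omega), Nat.div_eq_of_lt he, add_zero]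
  · unfold nuOf
    have h2 : S.enc j ν r sg = 6 * (S.d * j + ν) + (2 * r + sg) := by unfold enc; ring
    rw [h2, Nat.mul_add_div (by omega), Nat.div_eq_of_lt (by omega), add_zero,
      Nat.mul_add_mod, Nat.mod_eq_of_lt hν]
  · unfold rOf
    have h2 : S.enc j ν r sg = 2 * ((j * S.d + ν) * 3 + r) + sg := by unfold enc; ring
    rw [h2, Nat.mul_add_div (by omega), Nat.div_eq_of_lt (by omega), add_zero,
      show (j * S.d + ν) * 3 + r = 3 * (j * S.d + ν) + r by ring,
      Nat.mul_add_mod, Nat.mod_eq_of_lt hr]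
  · unfold sgOf
    have h2 : S.enc j ν r sg = 2 * ((j * S.d + ν) * 3 + r) + sg := by unfold enc; ring
    rw [h2, Nat.mul_add_mod, Nat.mod_eq_of_lt hsg]

lemma enc_lt (G : Good S) {j ν r sg : ℕ} (hj : j < S.k) (hν : ν < S.d) (hr : r < 3)
    (hsg : sg < 2) : S.enc j ν r sg < 6 * S.d * S.k := by
  have hd := G.hd
  have he : 6 * ν + 2 * r + sg < 6 * S.d := by omega
  have h1 : S.enc j ν r sg = 6 * S.d * j + (6 * ν + 2 * r + sg) := by unfold enc; ring
  have h2 : 6 * S.d * (j + 1) ≤ 6 * S.d * S.k := Nat.mul_le_mul_left _ (by omega)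
  have h3 : 6 * S.d * (j + 1) = 6 * S.d * j + 6 * S.d := by ring
  omega

/-- Reorganizing the sum of all lane outputs feeding coordinate `ν`. -/
lemma lane_sum (G : Good S) {ν : ℕ} (hν : ν < S.d) (l : ℕ) (t : ℝ) :
    ∑ w ∈ range S.W, S.outw w ν * S.laneVal l w t
      = ∑ p ∈ S.hostsAll, ∑ j ∈ range S.k, ∑ sg ∈ range 2,
          sgv sg * S.hatF l p j ν sg t := by
  have step0 : ∑ w ∈ range S.W, S.outw w ν * S.laneVal l w t
      = ∑ w ∈ range (6 * S.d * S.k), S.outw w ν * S.laneVal l w t := by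
    refine (Finset.sum_subset (Finset.range_subset_range.mpr G.hdk) ?_).symm
    intro w _ hw
    have : ¬ (w < 6 * S.d * S.k) := by simpa using hw
    unfold outw
    rw [if_neg (by tauto), zero_mul]
  rw [step0, show 6 * S.d * S.k = S.k * S.d * 3 * 2 by ring,
    sum_range_mul (S.k * S.d * 3) 2]
  rw [sum_range_mul (S.k * S.d) 3]
  rw [sum_range_mul S.k S.d]
  have step2 : ∀ j ∈ range S.k, ∀ ν' ∈ range S.d,
      ∑ r ∈ range 3, ∑ sg ∈ range 2, S.outw (((j * S.d + ν') * 3 + r) * 2 + sg) ν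
          * S.laneVal l (((j * S.d + ν') * 3 + r) * 2 + sg) t
        = if ν' = ν then ∑ r ∈ range 3, ∑ sg ∈ range 2, sgv sg *
            ∑ p ∈ S.hosts r, S.hatF l p j ν sg t else 0 := by
    intro j hj ν' hν'
    simp only [Finset.mem_range] at hj hν'
    by_cases hee : ν' = ν
    · subst hee
      rw [if_pos rfl]
      apply Finset.sum_congr rfl
      intro r hr
      apply Finset.sum_congr rfl
      intro sg hsg
      simp only [Finset.mem_range] at hr hsg
      obtain ⟨d1, d2, d3, d4⟩ := dec_enc (S := S) G j hν' hr hsg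
      have hlt := enc_lt G hj hν' hr hsg
      unfold outw laneVal
      rw [show ((j * S.d + ν') * 3 + r) * 2 + sg = S.enc j ν' r sg from rfl]
      rw [d1, d2, d3, d4, if_pos ⟨hlt, rfl⟩]
    · rw [if_neg hee]
      apply Finset.sum_eq_zero
      intro r hr
      apply Finset.sum_eq_zero
      intro sg hsg
      simp only [Finset.mem_range] at hr hsg
      obtain ⟨d1, d2, d3, d4⟩ := dec_enc (S := S) G j hν' hr hsg
      unfold outw
      rw [show ((j * S.d + ν') * 3 + r) * 2 + sg = S.enc j ν' r sg from rfl]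
      rw [d2]
      rw [if_neg (by tauto), zero_mul]
  rw [Finset.sum_congr rfl (fun j hj => Finset.sum_congr rfl (fun ν' hν' => step2 j hj ν' hν'))]
  have step3 : ∀ j ∈ range S.k,
      (∑ ν' ∈ range S.d, if ν' = ν then
        ∑ r ∈ range 3, ∑ sg ∈ range 2, sgv sg * ∑ p ∈ S.hosts r, S.hatF l p j ν sg t else 0)
      = ∑ p ∈ S.hostsAll, ∑ sg ∈ range 2, sgv sg * S.hatF l p j ν sg t := by
    intro j _
    rw [Finset.sum_ite_eq' (range S.d) ν, if_pos (Finset.mem_range.mpr hν)]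
    have h1 : ∀ r ∈ range 3, ∑ sg ∈ range 2, sgv sg * ∑ p ∈ S.hosts r, S.hatF l p j ν sg t
        = ∑ p ∈ S.hosts r, ∑ sg ∈ range 2, sgv sg * S.hatF l p j ν sg t := by
      intro r _
      rw [Finset.sum_congr rfl (fun sg _ => Finset.mul_sum _ _ _), Finset.sum_comm]
    rw [Finset.sum_congr rfl h1]
    exact Finset.sum_fiberwise_of_maps_to
      (fun p _ => Finset.mem_range.mpr (Nat.mod_lt _ (by norm_num))) _
  rw [Finset.sum_congr rfl step3, Finset.sum_comm]

end Dat

namespace Dat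
variable {S : Dat}

lemma spill_sum (G : Good S) (l ν : ℕ) (t : ℝ) :
    ∑ p ∈ range S.W, S.spill l p ν * relu (t - S.pB l p)
      = ∑ q ∈ S.hostsAll, ∑ j ∈ range S.k, ∑ sg ∈ range 2, sgv sg *
          ((S.m3 l q j ν sg - S.amp l q j ν sg) * relu (t - S.pB l (q + 1))
            + (-S.m3 l q j ν sg) * relu (t - S.pB l (q + 2))) := by
  unfold spill
  simp only [Finset.sum_mul]
  rw [Finset.sum_comm]
  apply Finset.sum_congr rfl
  intro q hq
  rw [Finset.sum_comm]
  apply Finset.sum_congr rfl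
  intro j hj
  rw [Finset.sum_comm]
  apply Finset.sum_congr rfl
  intro sg hsg
  obtain ⟨hq1, hq2⟩ := mem_hostsAll hq
  have hW := G.hW
  have e : ∀ p ∈ range S.W,
      sgv sg * ((if p = q + 1 then S.m3 l q j ν sg - S.amp l q j ν sg else 0)
          + (if p = q + 2 then -S.m3 l q j ν sg else 0)) * relu (t - S.pB l p)
      = (if p = q + 1 then S.m3 l q j ν sg - S.amp l q j ν sg else 0) * relu (t - S.pB l p)
          * sgv sg
        + (if p = q + 2 then -S.m3 l q j ν sg else 0) * relu (t - S.pB l p) * sgv sg := by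
    intro p _; ring
  rw [Finset.sum_congr rfl e, Finset.sum_add_distrib, ← Finset.sum_mul, ← Finset.sum_mul,
    sum_single (show q + 1 < S.W by omega), sum_single (show q + 2 < S.W by omega)]
  ring

/-- The per-block identity: block `l` contributes exactly the kinks of its window. -/
lemma block_id (G : Good S) {ν : ℕ} (hν : ν < S.d) (l : ℕ) (t : ℝ) :
    S.Bv l ν t
      = ∑ e ∈ range S.D, S.dom (l * S.D + e) ν * relu (t - S.X (l * S.D + e)) := by
  have expand_hat : ∀ q ∈ S.hostsAll, ∀ j ∈ range S.k,
      ∑ sg ∈ range 2, sgv sg * S.hatF l q j ν sg t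
        = S.kv l q j ν * relu (t - S.pI l q j)
          + ∑ sg ∈ range 2, sgv sg *
            ((S.m3 l q j ν sg - S.amp l q j ν sg) * relu (t - S.pB l (q + 1))
              + (-S.m3 l q j ν sg) * relu (t - S.pB l (q + 2))) := by
    intro q _ j _
    rw [show (2 : ℕ) = 1 + 1 from rfl, Finset.sum_range_succ, Finset.sum_range_succ,
      Finset.sum_range_zero, Finset.sum_range_succ, Finset.sum_range_succ,
      Finset.sum_range_zero]
    unfold hatF
    have a0 : S.amp l q j ν 0 = max (S.kv l q j ν) 0 := rfl
    have a1 : S.amp l q j ν 1 = max (-S.kv l q j ν) 0 := rfl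
    have s0 : sgv 0 = 1 := rfl
    have s1 : sgv 1 = -1 := by unfold sgv; norm_num
    rw [a0, a1, s0, s1]
    linear_combination (max_sub_max (S.kv l q j ν)) * relu (t - S.pI l q j)
  unfold Bv cB
  rw [lane_sum G hν l t, Finset.sum_congr rfl (fun q hq => Finset.sum_congr rfl
      (fun j hj => expand_hat q hq j hj)), Finset.sum_congr rfl
      (fun p _ => sub_mul (S.dom (S.bnd l p) ν) (S.spill l p ν) (relu (t - S.pB l p))),
    Finset.sum_sub_distrib, spill_sum G l ν t]
  have hpart := part_sum (W := S.W) (k := S.k) G.hW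
    (fun e => S.dom (l * S.D + e) ν * relu (t - S.X (l * S.D + e)))
  rw [show DD S.W S.k = S.D from rfl] at hpart
  rw [hpart]
  simp only [Finset.sum_add_distrib]
  have e1 : ∀ p ∈ range S.W, S.dom (l * S.D + offB S.W S.k p) ν
      * relu (t - S.X (l * S.D + offB S.W S.k p))
      = S.dom (S.bnd l p) ν * relu (t - S.pB l p) := fun p _ => rfl
  have e2 : ∀ p ∈ Finset.Ico 1 (S.W - 2), ∀ j ∈ range S.k,
      S.dom (l * S.D + offI S.W S.k p j) ν * relu (t - S.X (l * S.D + offI S.W S.k p j))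
      = S.kv l p j ν * relu (t - S.pI l p j) := fun p _ j _ => rfl
  rw [Finset.sum_congr rfl e1, Finset.sum_congr rfl (fun p hp => Finset.sum_congr rfl
    (fun j hj => e2 p hp j hj))]
  rw [show S.hostsAll = Finset.Ico 1 (S.W - 2) from rfl]
  abel

end Dat

namespace Dat
variable {S : Dat}

def LBhat (S : Dat) (l p j ν sg : ℕ) : ℝ :=
  S.amp l p j ν sg + |S.m3 l p j ν sg - S.amp l p j ν sg| + |S.m3 l p j ν sg|
def LBlane (S : Dat) (l w : ℕ) : ℝ :=
  ∑ p ∈ S.hosts (rOf w), S.LBhat l p (S.jOf w) (S.nuOf w) (sgOf w)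
def LBblock (S : Dat) (l : ℕ) : ℝ :=
  (∑ p ∈ range S.W, ∑ ν ∈ range S.d, |S.cB l p ν|) + ∑ w ∈ range S.W, S.LBlane l w
def Cb (S : Dat) (L : ℕ) : ℝ := ∑ l ∈ range L, S.LBblock l

lemma LBhat_nonneg (l p j ν sg : ℕ) : 0 ≤ S.LBhat l p j ν sg := by
  have := amp_nonneg (S := S) l p j ν sg
  have := abs_nonneg (S.m3 l p j ν sg - S.amp l p j ν sg)
  have := abs_nonneg (S.m3 l p j ν sg)
  unfold LBhat; linarith

lemma LBlane_nonneg (l w : ℕ) : 0 ≤ S.LBlane l w :=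
  Finset.sum_nonneg (fun p _ => LBhat_nonneg _ _ _ _ _)

lemma LBblock_nonneg (l : ℕ) : 0 ≤ S.LBblock l := by
  unfold LBblock
  have h1 : 0 ≤ ∑ p ∈ range S.W, ∑ ν ∈ range S.d, |S.cB l p ν| :=
    Finset.sum_nonneg (fun p _ => Finset.sum_nonneg (fun ν _ => abs_nonneg _))
  have h2 : 0 ≤ ∑ w ∈ range S.W, S.LBlane l w :=
    Finset.sum_nonneg (fun w _ => LBlane_nonneg _ _)
  linarith

lemma Cb_nonneg (L : ℕ) : 0 ≤ S.Cb L :=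
  Finset.sum_nonneg (fun l _ => LBblock_nonneg _)

lemma X0_le (G : Good S) (n : ℕ) : S.X 0 ≤ S.X n := G.mono.monotone (Nat.zero_le n)

lemma relu_le_R0 (G : Good S) (n : ℕ) (t : ℝ) :
    relu (t - S.X n) ≤ relu (t - S.X 0) :=
  relu_mono (by have := X0_le G n; linarith)

lemma abs_term_le (G : Good S) (c : ℝ) (n : ℕ) (t : ℝ) :
    |c * relu (t - S.X n)| ≤ |c| * relu (t - S.X 0) := by
  rw [abs_mul, abs_of_nonneg (relu_nonneg _)]
  exact mul_le_mul_of_nonneg_left (relu_le_R0 G n t) (abs_nonneg c)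

lemma term_lb (G : Good S) (c : ℝ) (n : ℕ) (t : ℝ) :
    -(|c| * relu (t - S.X 0)) ≤ c * relu (t - S.X n) := by
  have := abs_term_le G c n t
  have := neg_abs_le (c * relu (t - S.X n))
  linarith

lemma abs_hatF_le (G : Good S) (l p j ν sg : ℕ) (t : ℝ) :
    |S.hatF l p j ν sg t| ≤ S.LBhat l p j ν sg * relu (t - S.X 0) := by
  unfold hatF LBhat
  have h1 := abs_term_le G (S.amp l p j ν sg) (S.inti l p j) t
  have h2 := abs_term_le G (S.m3 l p j ν sg - S.amp l p j ν sg) (S.bnd l (p + 1)) t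
  have h3 := abs_term_le G (-S.m3 l p j ν sg) (S.bnd l (p + 2)) t
  rw [abs_of_nonneg (amp_nonneg l p j ν sg)] at h1
  rw [abs_neg] at h3
  calc |S.amp l p j ν sg * relu (t - S.pI l p j)
      + (S.m3 l p j ν sg - S.amp l p j ν sg) * relu (t - S.pB l (p + 1))
      + (-S.m3 l p j ν sg) * relu (t - S.pB l (p + 2))|
      ≤ |S.amp l p j ν sg * relu (t - S.pI l p j)
          + (S.m3 l p j ν sg - S.amp l p j ν sg) * relu (t - S.pB l (p + 1))|
        + |(-S.m3 l p j ν sg) * relu (t - S.pB l (p + 2))| := abs_add_le _ _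
    _ ≤ |S.amp l p j ν sg * relu (t - S.pI l p j)|
        + |(S.m3 l p j ν sg - S.amp l p j ν sg) * relu (t - S.pB l (p + 1))|
        + |(-S.m3 l p j ν sg) * relu (t - S.pB l (p + 2))| := by
          have := abs_add_le (S.amp l p j ν sg * relu (t - S.pI l p j))
            ((S.m3 l p j ν sg - S.amp l p j ν sg) * relu (t - S.pB l (p + 1)))
          linarith
    _ ≤ (S.amp l p j ν sg + |S.m3 l p j ν sg - S.amp l p j ν sg| + |S.m3 l p j ν sg|)
          * relu (t - S.X 0) := by
          rw [add_mul, add_mul]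
          have e1 : S.pI l p j = S.X (S.inti l p j) := rfl
          have e2 : S.pB l (p + 1) = S.X (S.bnd l (p + 1)) := rfl
          have e3 : S.pB l (p + 2) = S.X (S.bnd l (p + 2)) := rfl
          rw [e1, e2, e3]
          linarith

lemma abs_laneVal_le (G : Good S) (l w : ℕ) (t : ℝ) :
    |S.laneVal l w t| ≤ S.LBlane l w * relu (t - S.X 0) := by
  unfold laneVal LBlane
  calc |∑ p ∈ S.hosts (rOf w), S.hatF l p (S.jOf w) (S.nuOf w) (sgOf w) t|
      ≤ ∑ p ∈ S.hosts (rOf w), |S.hatF l p (S.jOf w) (S.nuOf w) (sgOf w) t| :=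
        Finset.abs_sum_le_sum_abs _ _
    _ ≤ ∑ p ∈ S.hosts (rOf w), S.LBhat l p (S.jOf w) (S.nuOf w) (sgOf w)
          * relu (t - S.X 0) :=
        Finset.sum_le_sum (fun p _ => abs_hatF_le G _ _ _ _ _ _)
    _ = (∑ p ∈ S.hosts (rOf w), S.LBhat l p (S.jOf w) (S.nuOf w) (sgOf w))
          * relu (t - S.X 0) := (Finset.sum_mul _ _ _).symm

lemma abs_outw_le (w ν : ℕ) : |S.outw w ν| ≤ 1 := by
  unfold outw
  split
  · unfold sgv; split <;> norm_num
  · norm_num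

lemma lane_term_lb (G : Good S) (l w ν : ℕ) (t : ℝ) :
    -(S.LBlane l w * relu (t - S.X 0)) ≤ S.outw w ν * S.laneVal l w t := by
  have h1 : |S.outw w ν * S.laneVal l w t| ≤ S.LBlane l w * relu (t - S.X 0) := by
    rw [abs_mul]
    calc |S.outw w ν| * |S.laneVal l w t| ≤ 1 * (S.LBlane l w * relu (t - S.X 0)) :=
          mul_le_mul (abs_outw_le w ν) (abs_laneVal_le G l w t) (abs_nonneg _) zero_le_one
      _ = S.LBlane l w * relu (t - S.X 0) := one_mul _
  have := neg_abs_le (S.outw w ν * S.laneVal l w t)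
  linarith

/-- Lower bound for the boundary-coefficients part of a block. -/
lemma ramp_part_lb (G : Good S) {ν : ℕ} (hν : ν < S.d) (l : ℕ) (t : ℝ) :
    -((∑ p ∈ range S.W, ∑ ν' ∈ range S.d, |S.cB l p ν'|) * relu (t - S.X 0))
      ≤ ∑ p ∈ range S.W, S.cB l p ν * relu (t - S.pB l p) := by
  have h1 : ∀ p ∈ range S.W, -(|S.cB l p ν| * relu (t - S.X 0))
      ≤ S.cB l p ν * relu (t - S.pB l p) := fun p _ => term_lb G _ _ _
  have h2 := Finset.sum_le_sum h1
  rw [Finset.sum_neg_distrib] at h2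
  have h3 : ∑ p ∈ range S.W, |S.cB l p ν| * relu (t - S.X 0)
      ≤ (∑ p ∈ range S.W, ∑ ν' ∈ range S.d, |S.cB l p ν'|) * relu (t - S.X 0) := by
    rw [Finset.sum_mul]
    apply Finset.sum_le_sum
    intro p _
    exact mul_le_mul_of_nonneg_right (Finset.single_le_sum (f := fun ν' => |S.cB l p ν'|)
      (fun _ _ => abs_nonneg _) (Finset.mem_range.mpr hν)) (relu_nonneg _)
  linarith

lemma Bv_lb (G : Good S) {ν : ℕ} (hν : ν < S.d) (l : ℕ) (t : ℝ) :
    -(S.LBblock l * relu (t - S.X 0)) ≤ S.Bv l ν t := by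
  unfold Bv LBblock
  have h1 := ramp_part_lb G hν l t
  have h2 : -((∑ w ∈ range S.W, S.LBlane l w) * relu (t - S.X 0))
      ≤ ∑ w ∈ range S.W, S.outw w ν * S.laneVal l w t := by
    calc -((∑ w ∈ range S.W, S.LBlane l w) * relu (t - S.X 0))
        = ∑ w ∈ range S.W, -(S.LBlane l w * relu (t - S.X 0)) := by
          rw [Finset.sum_neg_distrib, ← Finset.sum_mul]
      _ ≤ _ := Finset.sum_le_sum (fun w _ => lane_term_lb G l w ν t)
  have e : (((∑ p ∈ range S.W, ∑ ν' ∈ range S.d, |S.cB l p ν'|)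
      + ∑ w ∈ range S.W, S.LBlane l w) * relu (t - S.X 0))
      = (∑ p ∈ range S.W, ∑ ν' ∈ range S.d, |S.cB l p ν'|) * relu (t - S.X 0)
        + (∑ w ∈ range S.W, S.LBlane l w) * relu (t - S.X 0) := by ring
  linarith

def Zodd (S : Dat) (L l ν : ℕ) (t : ℝ) : ℝ :=
  S.Cb L * relu (t - S.X 0) + ∑ l' ∈ range l, S.Bv l' ν t
def Zeven (S : Dat) (L l ν : ℕ) (t : ℝ) : ℝ :=
  S.Zodd L l ν t + ∑ p ∈ range S.W, S.cB l p ν * relu (t - S.pB l p)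

lemma Zodd_succ (L l ν : ℕ) (t : ℝ) :
    S.Zodd L (l + 1) ν t
      = S.Zeven L l ν t + ∑ w ∈ range S.W, S.outw w ν * S.laneVal l w t := by
  unfold Zeven Zodd Bv
  rw [Finset.sum_range_succ]
  ring

lemma partial_LB_le (L l : ℕ) (hl : l ≤ L) : ∑ l' ∈ range l, S.LBblock l' ≤ S.Cb L :=
  Finset.sum_le_sum_of_subset_of_nonneg
    (Finset.range_subset_range.mpr hl) (fun l' _ _ => LBblock_nonneg _)

lemma Zodd_nonneg (G : Good S) {L l ν : ℕ} (hν : ν < S.d) (hl : l ≤ L) (t : ℝ) :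
    0 ≤ S.Zodd L l ν t := by
  unfold Zodd
  have h1 : ∑ l' ∈ range l, -(S.LBblock l' * relu (t - S.X 0))
      ≤ ∑ l' ∈ range l, S.Bv l' ν t :=
    Finset.sum_le_sum (fun l' _ => Bv_lb G hν l' t)
  have h2 : ∑ l' ∈ range l, S.LBblock l' * relu (t - S.X 0)
      ≤ S.Cb L * relu (t - S.X 0) := by
    rw [← Finset.sum_mul]
    exact mul_le_mul_of_nonneg_right (partial_LB_le L l hl) (relu_nonneg _)
  rw [Finset.sum_neg_distrib] at h1
  linarith

lemma Zeven_nonneg (G : Good S) {L l ν : ℕ} (hν : ν < S.d) (hl : l < L) (t : ℝ) :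
    0 ≤ S.Zeven L l ν t := by
  unfold Zeven Zodd
  have h1 : ∑ l' ∈ range l, -(S.LBblock l' * relu (t - S.X 0))
      ≤ ∑ l' ∈ range l, S.Bv l' ν t :=
    Finset.sum_le_sum (fun l' _ => Bv_lb G hν l' t)
  rw [Finset.sum_neg_distrib] at h1
  have h2 := ramp_part_lb G hν l t
  have h3 : ∑ l' ∈ range l, S.LBblock l' * relu (t - S.X 0)
      + (∑ p ∈ range S.W, ∑ ν' ∈ range S.d, |S.cB l p ν'|) * relu (t - S.X 0)
      ≤ S.Cb L * relu (t - S.X 0) := by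
    have h4 : ∑ l' ∈ range l, S.LBblock l'
        + (∑ p ∈ range S.W, ∑ ν' ∈ range S.d, |S.cB l p ν'|) ≤ S.Cb L := by
      have h5 : ∑ l' ∈ range (l + 1), S.LBblock l' ≤ S.Cb L := partial_LB_le L (l + 1) hl
      rw [Finset.sum_range_succ] at h5
      have h6 : (∑ p ∈ range S.W, ∑ ν' ∈ range S.d, |S.cB l p ν'|) ≤ S.LBblock l := by
        unfold LBblock
        have := Finset.sum_nonneg (fun w (_ : w ∈ range S.W) => LBlane_nonneg (S := S) l w)
        linarith
      linarith
    calc ∑ l' ∈ range l, S.LBblock l' * relu (t - S.X 0)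
        + (∑ p ∈ range S.W, ∑ ν' ∈ range S.d, |S.cB l p ν'|) * relu (t - S.X 0)
        = (∑ l' ∈ range l, S.LBblock l'
            + (∑ p ∈ range S.W, ∑ ν' ∈ range S.d, |S.cB l p ν'|)) * relu (t - S.X 0) := by
          simp only [add_mul, Finset.sum_mul]
      _ ≤ S.Cb L * relu (t - S.X 0) := mul_le_mul_of_nonneg_right h4 (relu_nonneg _)
  linarith

end Dat

/-! ### The network -/

namespace Dat

def widthF (S : Dat) (L : ℕ) : ℕ → ℕ :=
  fun ℓ => if ℓ = 0 then 1 else if ℓ = 2 * L + 1 then S.d else S.W + S.d + 1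

def inCoef (S : Dat) (L : ℕ) (i : ℕ) : ℝ :=
  if i = 0 then 1 else if i ≤ S.d then S.Cb L else 1

def inBias (S : Dat) (L : ℕ) (i : ℕ) : ℝ :=
  if i = 0 then -(S.X 0) else if i ≤ S.d then -(S.Cb L * S.X 0)
  else -(S.pB 0 (i - (S.d + 1)))

def oddCoef (S : Dat) (l i jcol : ℕ) : ℝ :=
  if i = 0 then (if jcol = 0 then 1 else 0)
  else if i ≤ S.d then
    (if jcol = i then 1
      else if S.d + 1 ≤ jcol ∧ jcol < S.d + 1 + S.W then S.cB l (jcol - (S.d + 1)) (i - 1)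
      else 0)
  else
    (if i - (S.d + 1) < 6 * S.d * S.k ∧ S.d + 1 ≤ jcol ∧ jcol < S.d + 1 + S.W
      then S.laneCoef l (i - (S.d + 1)) (jcol - (S.d + 1)) else 0)

def evenCoef (S : Dat) (i jcol : ℕ) : ℝ :=
  if i = 0 then (if jcol = 0 then 1 else 0)
  else if i ≤ S.d then
    (if jcol = i then 1
      else if S.d + 1 ≤ jcol ∧ jcol < S.d + 1 + S.W then S.outw (jcol - (S.d + 1)) (i - 1)
      else 0)
  else (if jcol = 0 then 1 else 0)

def evenBias (S : Dat) (m i : ℕ) : ℝ :=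
  if i = 0 then 0 else if i ≤ S.d then 0 else S.X 0 - S.pB m (i - (S.d + 1))

def outCoef (S : Dat) (L : ℕ) (i jcol : ℕ) : ℝ :=
  if jcol = 0 then -(S.Cb L)
  else if jcol = 1 + i then 1
  else if S.d + 1 ≤ jcol ∧ jcol < S.d + 1 + S.W then S.outw (jcol - (S.d + 1)) i else 0

def coefA (S : Dat) (L ℓ i j : ℕ) : ℝ :=
  if ℓ = 0 then (if j = 0 then inCoef S L i else 0)
  else if ℓ = 2 * L then outCoef S L i j
  else if ℓ % 2 = 1 then oddCoef S (ℓ / 2) i j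
  else evenCoef S i j

def biasA (S : Dat) (L : ℕ) (g0 : ℕ → ℝ) (ℓ i : ℕ) : ℝ :=
  if ℓ = 0 then inBias S L i
  else if ℓ = 2 * L then g0 i
  else if ℓ % 2 = 1 then 0
  else evenBias S (ℓ / 2) i

def net (S : Dat) (L : ℕ) (g0 : ℕ → ℝ) (hL : 1 ≤ L) : MLP 1 S.d where
  depth := 2 * L
  width := widthF S L
  width_in := rfl
  width_out := by unfold widthF; rw [if_neg (by omega), if_pos rfl]
  A := fun ℓ => Matrix.of (fun i j => coefA S L ℓ i.val j.val)
  b := fun ℓ i => biasA S L g0 ℓ i.val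

lemma widthF_zero (S : Dat) (L : ℕ) : widthF S L 0 = 1 := rfl

lemma widthF_hidden (S : Dat) (L : ℕ) {ℓ : ℕ} (h1 : 1 ≤ ℓ) (h2 : ℓ ≤ 2 * L) :
    widthF S L ℓ = S.W + S.d + 1 := by
  unfold widthF; rw [if_neg (by omega), if_neg (by omega)]

lemma sum_split (W d : ℕ) (F : ℕ → ℝ) :
    ∑ n ∈ range (W + d + 1), F n
      = F 0 + (∑ ν ∈ range d, F (1 + ν)) + ∑ w ∈ range W, F (d + 1 + w) := by
  rw [show W + d + 1 = 1 + d + W by omega, Finset.sum_range_add, Finset.sum_range_add,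
    Finset.sum_range_one]
  congr 1
  apply Finset.sum_congr rfl
  intro w _
  congr 1
  omega

lemma chan_cases {n W d : ℕ} (h : n < W + d + 1) :
    n = 0 ∨ (∃ ν, ν < d ∧ n = 1 + ν) ∨ (∃ w, w < W ∧ n = d + 1 + w) := by
  rcases Nat.eq_zero_or_pos n with h0 | h0
  · exact Or.inl h0
  · rcases Nat.lt_or_ge n (d + 1) with h1 | h1
    · exact Or.inr (Or.inl ⟨n - 1, by omega, by omega⟩)
    · exact Or.inr (Or.inr ⟨n - (d + 1), by omega, by omega⟩)

lemma sum_shift_ite {d : ℕ} {ν : ℕ} (hν : ν < d) (g : ℕ → ℝ) :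
    ∑ ν' ∈ range d, (if 1 + ν' = 1 + ν then (1 : ℝ) else 0) * g ν' = g ν := by
  have e : ∀ ν' ∈ range d, (if 1 + ν' = 1 + ν then (1 : ℝ) else 0) * g ν'
      = if ν' = ν then g ν' else 0 := by
    intro ν' _
    by_cases h : ν' = ν
    · subst h; rw [if_pos rfl, one_mul, if_pos rfl]
    · rw [if_neg (by omega), if_neg h, zero_mul]
  rw [Finset.sum_congr rfl e, Finset.sum_ite_eq' (range d) ν g,
    if_pos (Finset.mem_range.mpr hν)]

lemma net_step (S : Dat) (L : ℕ) (g0 : ℕ → ℝ) (hL : 1 ≤ L) (t : ℝ) (ℓ : ℕ) (v : ℕ → ℝ)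
    (hv : ∀ j : Fin (widthF S L ℓ), (net S L g0 hL).layer (fun _ => t) ℓ j = v j.val)
    (i : Fin (widthF S L (ℓ + 1))) :
    (net S L g0 hL).layer (fun _ => t) (ℓ + 1) i
      = relu ((∑ n ∈ range (widthF S L ℓ), coefA S L ℓ i.val n * v n)
          + biasA S L g0 ℓ i.val) := by
  show relu (((net S L g0 hL).A ℓ).mulVec ((net S L g0 hL).layer (fun _ => t) ℓ) i
      + (net S L g0 hL).b ℓ i) = _
  congr 1
  have h1 : ((net S L g0 hL).A ℓ).mulVec ((net S L g0 hL).layer (fun _ => t) ℓ) i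
      = ∑ j : Fin (widthF S L ℓ), coefA S L ℓ i.val j.val * v j.val := by
    have hA : (net S L g0 hL).A ℓ = Matrix.of (fun i j => coefA S L ℓ i.val j.val) := rfl
    simp only [Matrix.mulVec, dotProduct, hA, Matrix.of_apply]
    exact Finset.sum_congr rfl (fun j _ => by rw [hv j]; rfl)
  rw [h1, Fin.sum_univ_eq_sum_range (fun n => coefA S L ℓ i.val n * v n) (widthF S L ℓ)]
  rfl

lemma layer0_eq (S : Dat) (L : ℕ) (g0 : ℕ → ℝ) (hL : 1 ≤ L) (t : ℝ)
    (j : Fin (widthF S L 0)) :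
    (net S L g0 hL).layer (fun _ => t) 0 j = t := rfl

end Dat

namespace Dat
variable {S : Dat}

def VOdd (S : Dat) (L l i : ℕ) (t : ℝ) : ℝ :=
  if i = 0 then relu (t - S.X 0)
  else if i ≤ S.d then S.Zodd L l (i - 1) t
  else relu (t - S.pB l (i - (S.d + 1)))

def VEven (S : Dat) (L l i : ℕ) (t : ℝ) : ℝ :=
  if i = 0 then relu (t - S.X 0)
  else if i ≤ S.d then S.Zeven L l (i - 1) t
  else if i - (S.d + 1) < 6 * S.d * S.k then S.laneVal l (i - (S.d + 1)) t else 0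

lemma jOf_lt (G : Good S) {w : ℕ} (hw : w < 6 * S.d * S.k) : S.jOf w < S.k := by
  unfold jOf
  have h6 : 0 < 6 * S.d := by have := G.hd; omega
  rw [Nat.div_lt_iff_lt_mul h6]
  calc w < 6 * S.d * S.k := hw
    _ = S.k * (6 * S.d) := by ring

lemma layer1_eq (G : Good S) (L : ℕ) (g0 : ℕ → ℝ) (hL : 1 ≤ L) (t : ℝ) :
    ∀ i : Fin (widthF S L 1), (net S L g0 hL).layer (fun _ => t) 1 i = VOdd S L 0 i.val t := by
  intro i
  have h0 := net_step S L g0 hL t 0 (fun _ => t) (fun j => rfl) i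
  refine h0.trans ?_
  rw [widthF_zero, Finset.sum_range_one]
  have hc : coefA S L 0 i.val 0 = inCoef S L i.val := by
    unfold coefA; rw [if_pos rfl, if_pos rfl]
  have hb : biasA S L g0 0 i.val = inBias S L i.val := by unfold biasA; rw [if_pos rfl]
  rw [hc, hb]
  have hi : i.val < S.W + S.d + 1 :=
    lt_of_lt_of_le i.isLt (le_of_eq (widthF_hidden S L (by omega) (by omega)))
  rcases chan_cases hi with h | ⟨ν, hν, h⟩ | ⟨w, hw, h⟩
  · rw [h]
    unfold inCoef inBias VOdd
    rw [if_pos rfl, if_pos rfl, if_pos rfl, one_mul]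
    try exact congrArg relu (by ring)
  · rw [h]
    unfold inCoef inBias VOdd
    rw [if_neg (by omega), if_pos (by omega), if_neg (by omega), if_pos (by omega),
      if_neg (by omega), if_pos (by omega)]
    unfold Zodd
    rw [Finset.sum_range_zero, add_zero,
      show S.Cb L * t + -(S.Cb L * S.X 0) = S.Cb L * (t - S.X 0) by ring,
      relu_const_mul (Cb_nonneg L)]
  · rw [h]
    unfold inCoef inBias VOdd
    rw [if_neg (by omega), if_neg (by omega), if_neg (by omega), if_neg (by omega),
      if_neg (by omega), if_neg (by omega), one_mul]
    try exact congrArg relu (by ring)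

lemma layerOE_eq (G : Good S) (L : ℕ) (g0 : ℕ → ℝ) (hL : 1 ≤ L) (t : ℝ)
    {l : ℕ} (hl : l < L)
    (ih : ∀ j : Fin (widthF S L (2 * l + 1)),
      (net S L g0 hL).layer (fun _ => t) (2 * l + 1) j = VOdd S L l j.val t) :
    ∀ i : Fin (widthF S L (2 * l + 2)),
      (net S L g0 hL).layer (fun _ => t) (2 * l + 2) i = VEven S L l i.val t := by
  intro i
  have hv : ∀ j : Fin (widthF S L (2 * l + 1)),
      (net S L g0 hL).layer (fun _ => t) (2 * l + 1) j
        = (fun n => VOdd S L l n t) j.val := ih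
  have h0 := net_step S L g0 hL t (2 * l + 1) (fun n => VOdd S L l n t) hv i
  refine Eq.trans (by exact h0) ?_
  have hc : ∀ n, coefA S L (2 * l + 1) i.val n = oddCoef S l i.val n := by
    intro n
    unfold coefA
    rw [if_neg (by omega), if_neg (by omega), if_pos (by omega),
      show (2 * l + 1) / 2 = l by omega]
  have hb : biasA S L g0 (2 * l + 1) i.val = 0 := by
    unfold biasA
    rw [if_neg (by omega), if_neg (by omega), if_pos (by omega)]
  rw [Finset.sum_congr rfl (fun n _ => by rw [hc n]), hb, add_zero,
    widthF_hidden S L (by omega) (by omega),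
    sum_split S.W S.d (fun n => oddCoef S l i.val n * VOdd S L l n t)]
  have hi : i.val < S.W + S.d + 1 :=
    lt_of_lt_of_le i.isLt (le_of_eq (widthF_hidden S L (by omega) (by omega)))
  rcases chan_cases hi with h | ⟨ν, hν, h⟩ | ⟨w, hw, h⟩
  · rw [h]
    have e0 : oddCoef S l 0 0 * VOdd S L l 0 t = relu (t - S.X 0) := by
      unfold oddCoef VOdd
      rw [if_pos rfl, if_pos rfl, if_pos rfl, one_mul]
    have e1 : ∀ ν' ∈ range S.d, oddCoef S l 0 (1 + ν') * VOdd S L l (1 + ν') t = 0 := by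
      intro ν' _
      unfold oddCoef
      rw [if_pos rfl, if_neg (by omega), zero_mul]
    have e2 : ∀ w' ∈ range S.W, oddCoef S l 0 (S.d + 1 + w') * VOdd S L l (S.d + 1 + w') t
        = 0 := by
      intro w' _
      unfold oddCoef
      rw [if_pos rfl, if_neg (by omega), zero_mul]
    rw [e0, Finset.sum_eq_zero e1, Finset.sum_eq_zero e2, add_zero, add_zero, relu_relu]
    unfold VEven
    rw [if_pos rfl]
  · rw [h]
    have e0 : oddCoef S l (1 + ν) 0 * VOdd S L l 0 t = 0 := by
      unfold oddCoef
      rw [if_neg (by omega), if_pos (by omega), if_neg (by omega), if_neg (by omega), zero_mul]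
    have e1 : ∀ ν' ∈ range S.d, oddCoef S l (1 + ν) (1 + ν') * VOdd S L l (1 + ν') t
        = (if 1 + ν' = 1 + ν then (1:ℝ) else 0) * VOdd S L l (1 + ν') t := by
      intro ν' hν'
      simp only [Finset.mem_range] at hν'
      unfold oddCoef
      by_cases hee : 1 + ν' = 1 + ν
      · rw [if_neg (by omega), if_pos (by omega), if_pos hee, if_pos hee]
      · rw [if_neg (by omega), if_pos (by omega), if_neg hee, if_neg hee, if_neg (by omega)]
    have e2 : ∀ w' ∈ range S.W, oddCoef S l (1 + ν) (S.d + 1 + w') * VOdd S L l (S.d + 1 + w') t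
        = S.cB l w' ν * relu (t - S.pB l w') := by
      intro w' hw'
      simp only [Finset.mem_range] at hw'
      unfold oddCoef VOdd
      rw [if_neg (by omega), if_pos (by omega), if_neg (by omega), if_pos (by omega),
        if_neg (by omega), if_neg (by omega),
        show S.d + 1 + w' - (S.d + 1) = w' by omega, show 1 + ν - 1 = ν by omega]
    rw [e0, Finset.sum_congr rfl e1, sum_shift_ite hν (fun ν' => VOdd S L l (1 + ν') t),
      Finset.sum_congr rfl e2, zero_add]
    have eV : VOdd S L l (1 + ν) t = S.Zodd L l ν t := by
      unfold VOdd
      rw [if_neg (by omega), if_pos (by omega), show 1 + ν - 1 = ν by omega]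
    rw [eV]
    have : S.Zodd L l ν t + ∑ w' ∈ range S.W, S.cB l w' ν * relu (t - S.pB l w')
        = S.Zeven L l ν t := rfl
    rw [this, relu_of_nonneg (Zeven_nonneg G hν hl t)]
    unfold VEven
    rw [if_neg (by omega), if_pos (by omega), show 1 + ν - 1 = ν by omega]
  · rw [h]
    have hiw : S.d + 1 + w - (S.d + 1) = w := by omega
    by_cases hwk : w < 6 * S.d * S.k
    · have e0 : oddCoef S l (S.d + 1 + w) 0 * VOdd S L l 0 t = 0 := by
        unfold oddCoef
        rw [if_neg (by omega), if_neg (by omega), if_neg (by omega), zero_mul]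
      have e1 : ∀ ν' ∈ range S.d, oddCoef S l (S.d + 1 + w) (1 + ν')
          * VOdd S L l (1 + ν') t = 0 := by
        intro ν' hν'
        simp only [Finset.mem_range] at hν'
        unfold oddCoef
        rw [if_neg (by omega), if_neg (by omega), if_neg (by omega), zero_mul]
      have e2 : ∀ p' ∈ range S.W, oddCoef S l (S.d + 1 + w) (S.d + 1 + p')
          * VOdd S L l (S.d + 1 + p') t
          = S.laneCoef l w p' * relu (t - S.pB l p') := by
        intro p' hp'
        simp only [Finset.mem_range] at hp'
        unfold oddCoef VOdd
        rw [if_neg (by omega), if_neg (by omega), if_pos (by rw [hiw]; omega),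
          if_neg (by omega), if_neg (by omega), hiw,
          show S.d + 1 + p' - (S.d + 1) = p' by omega]
      rw [e0, Finset.sum_eq_zero e1, Finset.sum_congr rfl e2, zero_add, zero_add,
        lane_eval G l w (jOf_lt G hwk) t]
      unfold VEven
      rw [if_neg (by omega), if_neg (by omega), hiw, if_pos hwk]
    · have e0 : oddCoef S l (S.d + 1 + w) 0 * VOdd S L l 0 t = 0 := by
        unfold oddCoef
        rw [if_neg (by omega), if_neg (by omega), if_neg (by omega), zero_mul]
      have e1 : ∀ ν' ∈ range S.d, oddCoef S l (S.d + 1 + w) (1 + ν')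
          * VOdd S L l (1 + ν') t = 0 := by
        intro ν' hν'
        unfold oddCoef
        rw [if_neg (by omega), if_neg (by omega), if_neg (by omega), zero_mul]
      have e2 : ∀ p' ∈ range S.W, oddCoef S l (S.d + 1 + w) (S.d + 1 + p')
          * VOdd S L l (S.d + 1 + p') t = 0 := by
        intro p' hp'
        unfold oddCoef
        rw [if_neg (by omega), if_neg (by omega), if_neg (by rw [hiw]; tauto), zero_mul]
      rw [e0, Finset.sum_eq_zero e1, Finset.sum_eq_zero e2, zero_add, zero_add, relu_zero]
      unfold VEven
      rw [if_neg (by omega), if_neg (by omega), hiw, if_neg hwk]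

end Dat

namespace Dat
variable {S : Dat}

lemma layerEO_eq (G : Good S) (L : ℕ) (g0 : ℕ → ℝ) (hL : 1 ≤ L) (t : ℝ)
    {l : ℕ} (hl : l + 1 < L)
    (ih : ∀ j : Fin (widthF S L (2 * l + 2)),
      (net S L g0 hL).layer (fun _ => t) (2 * l + 2) j = VEven S L l j.val t) :
    ∀ i : Fin (widthF S L (2 * l + 2 + 1)),
      (net S L g0 hL).layer (fun _ => t) (2 * l + 2 + 1) i = VOdd S L (l + 1) i.val t := by
  intro i
  have hv : ∀ j : Fin (widthF S L (2 * l + 2)),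
      (net S L g0 hL).layer (fun _ => t) (2 * l + 2) j
        = (fun n => VEven S L l n t) j.val := ih
  have h0 := net_step S L g0 hL t (2 * l + 2) (fun n => VEven S L l n t) hv i
  refine Eq.trans (by exact h0) ?_
  have hc : ∀ n, coefA S L (2 * l + 2) i.val n = evenCoef S i.val n := by
    intro n
    unfold coefA
    rw [if_neg (by omega), if_neg (by omega), if_neg (by omega)]
  have hb : biasA S L g0 (2 * l + 2) i.val = evenBias S (l + 1) i.val := by
    unfold biasA
    rw [if_neg (by omega), if_neg (by omega), if_neg (by omega),
      show (2 * l + 2) / 2 = l + 1 by omega]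
  rw [Finset.sum_congr rfl (fun n _ => by rw [hc n]), hb,
    widthF_hidden S L (by omega) (by omega),
    sum_split S.W S.d (fun n => evenCoef S i.val n * VEven S L l n t)]
  have hi : i.val < S.W + S.d + 1 :=
    lt_of_lt_of_le i.isLt (le_of_eq (widthF_hidden S L (by omega) (by omega)))
  rcases chan_cases hi with h | ⟨ν, hν, h⟩ | ⟨w, hw, h⟩
  · rw [h]
    have e0 : evenCoef S 0 0 * VEven S L l 0 t = relu (t - S.X 0) := by
      unfold evenCoef VEven
      rw [if_pos rfl, if_pos rfl, if_pos rfl, one_mul]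
    have e1 : ∀ ν' ∈ range S.d, evenCoef S 0 (1 + ν') * VEven S L l (1 + ν') t = 0 := by
      intro ν' _
      unfold evenCoef
      rw [if_pos rfl, if_neg (by omega), zero_mul]
    have e2 : ∀ w' ∈ range S.W, evenCoef S 0 (S.d + 1 + w') * VEven S L l (S.d + 1 + w') t
        = 0 := by
      intro w' _
      unfold evenCoef
      rw [if_pos rfl, if_neg (by omega), zero_mul]
    have eb : evenBias S (l + 1) 0 = 0 := by unfold evenBias; rw [if_pos rfl]
    rw [e0, Finset.sum_eq_zero e1, Finset.sum_eq_zero e2, eb, add_zero, add_zero, add_zero,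
      relu_relu]
    unfold VOdd
    rw [if_pos rfl]
  · rw [h]
    have e0 : evenCoef S (1 + ν) 0 * VEven S L l 0 t = 0 := by
      unfold evenCoef
      rw [if_neg (by omega), if_pos (by omega), if_neg (by omega), if_neg (by omega), zero_mul]
    have e1 : ∀ ν' ∈ range S.d, evenCoef S (1 + ν) (1 + ν') * VEven S L l (1 + ν') t
        = (if 1 + ν' = 1 + ν then (1:ℝ) else 0) * VEven S L l (1 + ν') t := by
      intro ν' hν'
      simp only [Finset.mem_range] at hν'
      unfold evenCoef
      by_cases hee : 1 + ν' = 1 + ν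
      · rw [if_neg (by omega), if_pos (by omega), if_pos hee, if_pos hee]
      · rw [if_neg (by omega), if_pos (by omega), if_neg hee, if_neg hee, if_neg (by omega)]
    have e2 : ∀ w' ∈ range S.W, evenCoef S (1 + ν) (S.d + 1 + w') * VEven S L l (S.d + 1 + w') t
        = S.outw w' ν * S.laneVal l w' t := by
      intro w' hw'
      simp only [Finset.mem_range] at hw'
      unfold evenCoef
      rw [if_neg (by omega), if_pos (by omega), if_neg (by omega), if_pos (by omega),
        show S.d + 1 + w' - (S.d + 1) = w' by omega, show 1 + ν - 1 = ν by omega]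
      by_cases hwk : w' < 6 * S.d * S.k
      · unfold VEven
        rw [if_neg (by omega), if_neg (by omega),
          show S.d + 1 + w' - (S.d + 1) = w' by omega, if_pos hwk]
      · unfold outw VEven
        rw [if_neg (by tauto), if_neg (by omega), if_neg (by omega),
          show S.d + 1 + w' - (S.d + 1) = w' by omega, if_neg hwk, zero_mul, zero_mul]
    have eb : evenBias S (l + 1) (1 + ν) = 0 := by
      unfold evenBias; rw [if_neg (by omega), if_pos (by omega)]
    have eV : VEven S L l (1 + ν) t = S.Zeven L l ν t := by
      unfold VEven
      rw [if_neg (by omega), if_pos (by omega), show 1 + ν - 1 = ν by omega]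
    rw [e0, Finset.sum_congr rfl e1, sum_shift_ite hν (fun ν' => VEven S L l (1 + ν') t),
      Finset.sum_congr rfl e2, eV, eb, zero_add, add_zero, ← Zodd_succ L l ν t,
      relu_of_nonneg (Zodd_nonneg G hν (by omega) t)]
    unfold VOdd
    rw [if_neg (by omega), if_pos (by omega), show 1 + ν - 1 = ν by omega]
  · rw [h]
    have hiw : S.d + 1 + w - (S.d + 1) = w := by omega
    have e0 : evenCoef S (S.d + 1 + w) 0 * VEven S L l 0 t = relu (t - S.X 0) := by
      unfold evenCoef VEven
      rw [if_neg (by omega), if_neg (by omega), if_pos rfl, if_pos rfl, one_mul]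
    have e1 : ∀ ν' ∈ range S.d, evenCoef S (S.d + 1 + w) (1 + ν')
        * VEven S L l (1 + ν') t = 0 := by
      intro ν' _
      unfold evenCoef
      rw [if_neg (by omega), if_neg (by omega), if_neg (by omega), zero_mul]
    have e2 : ∀ p' ∈ range S.W, evenCoef S (S.d + 1 + w) (S.d + 1 + p')
        * VEven S L l (S.d + 1 + p') t = 0 := by
      intro p' _
      unfold evenCoef
      rw [if_neg (by omega), if_neg (by omega), if_neg (by omega), zero_mul]
    have eb : evenBias S (l + 1) (S.d + 1 + w) = S.X 0 - S.pB (l + 1) w := by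
      unfold evenBias
      rw [if_neg (by omega), if_neg (by omega), hiw]
    have hsh := relu_shift (t := t) (X0 := S.X 0) (a := S.pB (l + 1) w)
      (X0_le G (S.bnd (l + 1) w))
    rw [e0, Finset.sum_eq_zero e1, Finset.sum_eq_zero e2, eb, add_zero, add_zero, hsh]
    unfold VOdd
    rw [if_neg (by omega), if_neg (by omega), hiw]

lemma layers_eq (G : Good S) (L : ℕ) (g0 : ℕ → ℝ) (hL : 1 ≤ L) (t : ℝ) :
    ∀ l, l < L →
      (∀ i : Fin (widthF S L (2 * l + 1)),
        (net S L g0 hL).layer (fun _ => t) (2 * l + 1) i = VOdd S L l i.val t)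
      ∧ (∀ i : Fin (widthF S L (2 * l + 2)),
        (net S L g0 hL).layer (fun _ => t) (2 * l + 2) i = VEven S L l i.val t) := by
  intro l
  induction l with
  | zero =>
    intro h0
    refine ⟨fun i => layer1_eq G L g0 hL t i, ?_⟩
    exact layerOE_eq G L g0 hL t h0 (fun i => layer1_eq G L g0 hL t i)
  | succ n ih =>
    intro h
    obtain ⟨ho, he⟩ := ih (by omega)
    have hodd := layerEO_eq G L g0 hL t (by omega : n + 1 < L) he
    exact ⟨fun i => hodd i, fun i => layerOE_eq G L g0 hL t h (fun j => hodd j) i⟩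

lemma net_eval (G : Good S) (L' : ℕ) (g0 : ℕ → ℝ) (hL : 1 ≤ L' + 1) (t : ℝ)
    (ν : Fin S.d) :
    (net S (L' + 1) g0 hL).eval (fun _ => t) ν
      = g0 ν.val + ∑ q ∈ range ((L' + 1) * S.D), S.dom q ν.val * relu (t - S.X q) := by
  set L := L' + 1 with hLdef
  have hlayers := (layers_eq G L g0 hL t L' (by omega)).2
  show ((net S L g0 hL).A (2 * L)).mulVec ((net S L g0 hL).layer (fun _ => t) (2 * L)) _
      + (net S L g0 hL).b (2 * L) _ = _
  have hν : ν.val < S.d := ν.isLt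
  have hvcast : ((Fin.cast (net S L g0 hL).width_out.symm ν) : ℕ) = ν.val := rfl
  have hlay : ∀ j : Fin (widthF S L (2 * L)),
      (net S L g0 hL).layer (fun _ => t) (2 * L) j = VEven S L L' j.val t :=
    fun j => hlayers j
  have hA : (net S L g0 hL).A (2 * L) = Matrix.of
      (fun i j => coefA S L (2 * L) i.val j.val) := rfl
  have hmv : ((net S L g0 hL).A (2 * L)).mulVec
      ((net S L g0 hL).layer (fun _ => t) (2 * L)) (Fin.cast (net S L g0 hL).width_out.symm ν)
      = ∑ n ∈ range (widthF S L (2 * L)), coefA S L (2 * L) ν.val n * VEven S L L' n t := by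
    have h1 : ((net S L g0 hL).A (2 * L)).mulVec
        ((net S L g0 hL).layer (fun _ => t) (2 * L))
        (Fin.cast (net S L g0 hL).width_out.symm ν)
        = ∑ j : Fin (widthF S L (2 * L)), coefA S L (2 * L) ν.val j.val
            * VEven S L L' j.val t := by
      simp only [Matrix.mulVec, dotProduct, hA, Matrix.of_apply, hvcast]
      exact Finset.sum_congr rfl (fun j _ => by rw [hlay j]; rfl)
    rw [h1, Fin.sum_univ_eq_sum_range (fun n => coefA S L (2 * L) ν.val n
      * VEven S L L' n t) (widthF S L (2 * L))]
  have hbb : (net S L g0 hL).b (2 * L) (Fin.cast (net S L g0 hL).width_out.symm ν)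
      = g0 ν.val := by
    show biasA S L g0 (2 * L) ν.val = g0 ν.val
    unfold biasA
    rw [if_neg (by omega), if_pos rfl]
  refine Eq.trans (congrArg₂ (· + ·) hmv hbb : _ = ∑ n ∈ range (widthF S L (2 * L)),
    coefA S L (2 * L) ν.val n * VEven S L L' n t + g0 ν.val) ?_
  have hcoef : ∀ n, coefA S L (2 * L) ν.val n = outCoef S L ν.val n := by
    intro n
    unfold coefA
    rw [if_neg (by omega), if_pos rfl]
  rw [Finset.sum_congr rfl (fun n _ => by rw [hcoef n]),
    widthF_hidden S L (by omega) (by omega),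
    sum_split S.W S.d (fun n => outCoef S L ν.val n * VEven S L L' n t)]
  have e0 : outCoef S L ν.val 0 * VEven S L L' 0 t = -(S.Cb L) * relu (t - S.X 0) := by
    unfold outCoef VEven
    rw [if_pos rfl, if_pos rfl]
  have e1 : ∀ ν' ∈ range S.d, outCoef S L ν.val (1 + ν') * VEven S L L' (1 + ν') t
      = (if 1 + ν' = 1 + ν.val then (1:ℝ) else 0) * VEven S L L' (1 + ν') t := by
    intro ν' hν'
    simp only [Finset.mem_range] at hν'
    unfold outCoef
    by_cases hee : 1 + ν' = 1 + ν.val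
    · rw [if_neg (by omega), if_pos hee, if_pos hee]
    · rw [if_neg (by omega), if_neg hee, if_neg hee, if_neg (by omega)]
  have e2 : ∀ w' ∈ range S.W, outCoef S L ν.val (S.d + 1 + w') * VEven S L L' (S.d + 1 + w') t
      = S.outw w' ν.val * S.laneVal L' w' t := by
    intro w' hw'
    simp only [Finset.mem_range] at hw'
    unfold outCoef
    rw [if_neg (by omega), if_neg (by omega), if_pos (by omega),
      show S.d + 1 + w' - (S.d + 1) = w' by omega]
    by_cases hwk : w' < 6 * S.d * S.k
    · unfold VEven
      rw [if_neg (by omega), if_neg (by omega),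
        show S.d + 1 + w' - (S.d + 1) = w' by omega, if_pos hwk]
    · unfold outw VEven
      rw [if_neg (by tauto), if_neg (by omega), if_neg (by omega),
        show S.d + 1 + w' - (S.d + 1) = w' by omega, if_neg hwk, zero_mul, zero_mul]
  have eV : VEven S L L' (1 + ν.val) t = S.Zeven L L' ν.val t := by
    unfold VEven
    rw [if_neg (by omega), if_pos (by omega), show 1 + ν.val - 1 = ν.val by omega]
  rw [e0, Finset.sum_congr rfl e1,
    sum_shift_ite ν.isLt (fun ν' => VEven S L L' (1 + ν') t),
    Finset.sum_congr rfl e2, eV]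
  have hZ : S.Zeven L L' ν.val t + ∑ w' ∈ range S.W, S.outw w' ν.val * S.laneVal L' w' t
      = S.Zodd L (L' + 1) ν.val t := (Zodd_succ L L' ν.val t).symm
  have hZodd : S.Zodd L (L' + 1) ν.val t
      = S.Cb L * relu (t - S.X 0) + ∑ l ∈ range (L' + 1), S.Bv l ν.val t := rfl
  have hBlocks : ∑ l ∈ range (L' + 1), S.Bv l ν.val t
      = ∑ q ∈ range ((L' + 1) * S.D), S.dom q ν.val * relu (t - S.X q) := by
    rw [sum_range_mul (L' + 1) S.D (fun q => S.dom q ν.val * relu (t - S.X q))]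
    exact Finset.sum_congr rfl (fun l _ => block_id G ν.isLt l t)
  linarith [hZ, hZodd, hBlocks]

end Dat
end
end S4

/-! ### Final assembly -/

lemma capacity (W d k L N : ℕ) (hd : 1 ≤ d) (hL : 1 ≤ L) (hdk : 6 * d * k ≤ W)
    (hk : 1 ≤ k) (hN : N ≤ W * k * L) : N + 2 ≤ L * S4.DD W k := by
  have h6k : 6 * k ≤ W := le_trans (Nat.mul_le_mul_right k (by omega)) hdk
  have hD : S4.DD W k = (W - 3) * k + W := by
    unfold S4.DD
    have h1 : (W - 3) * (k + 1) = (W - 3) * k + (W - 3) := by ring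
    omega
  have hWk : W * k = (W - 3) * k + 3 * k := by
    have hW3 : W - 3 + 3 = W := by omega
    calc W * k = (W - 3 + 3) * k := by rw [hW3]
      _ = (W - 3) * k + 3 * k := by ring
  have h1 : (3 * k + 3) * L ≤ W * L := Nat.mul_le_mul_right L (by omega)
  have h2 : (3 * k + 3) * L = 3 * k * L + 3 * L := by ring
  have h3 : 3 * L ≥ 3 := by omega
  have h4 : L * ((W - 3) * k + W) = (W - 3) * k * L + W * L := by ring
  have hD2 : L * S4.DD W k = L * ((W - 3) * k + W) := by rw [hD]
  have h5 : W * k * L = (W - 3) * k * L + 3 * k * L := by rw [hWk]; ring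
  omega

def trivMLP (L : ℕ) : MLP 1 0 where
  depth := 2 * L
  width := fun ℓ => if ℓ = 0 then 1 else if ℓ = 2 * L + 1 then 0 else 1
  width_in := rfl
  width_out := by
    show (if 2 * L + 1 = 0 then 1 else if 2 * L + 1 = 2 * L + 1 then 0 else 1) = 0
    rw [if_neg (by omega), if_pos rfl]
  A := fun ℓ => Matrix.of (fun _ _ => 0)
  b := fun _ _ => 0

/-- CPwL functions are realizable by ReLU networks.  If `W ≥ 6d`,
`L ≥ 1` and `N ≤ W·⌊W/(6d)⌋·L`, then `S^d(x₀,…,x_{N+1}) ⊆ NN_{1,d}(W+d+1, 2L)`. -/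
theorem statement4 (d N W L : ℕ) (hW : 6 * d ≤ W) (hL : 1 ≤ L)
    (hN : N ≤ W * (W / (6 * d)) * L)
    (x : ℕ → ℝ) (hx : ∀ i ≤ N, x i < x (i + 1)) :
    CPwLClass d N x ⊆ NNFromReal d (W + d + 1) (2 * L) := by
  intro f hf
  rcases Nat.eq_zero_or_pos d with hd0 | hd
  · -- trivial case d = 0
    subst hd0
    refine ⟨(trivMLP L).eval, ⟨trivMLP L, rfl, ?_, rfl⟩, ?_⟩
    · intro ℓ h1 h2
      show (if ℓ = 0 then 1 else if ℓ = 2 * L + 1 then 0 else 1) ≤ W + 0 + 1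
      split
      · omega
      · split <;> omega
    · funext t
      funext ν
      exact ν.elim0
  · -- main case
    obtain ⟨L', rfl⟩ : ∃ L', L = L' + 1 := ⟨L - 1, by omega⟩
    obtain ⟨κ, hκ⟩ := S4.kink_rep hx hf
    set k := W / (6 * d) with hk
    have hk1 : 1 ≤ k := (Nat.one_le_div_iff (by omega)).mpr hW
    have hdk : 6 * d * k ≤ W := by
      calc 6 * d * k = k * (6 * d) := by ring
        _ ≤ W := Nat.div_mul_le_self W (6 * d)
    set X : ℕ → ℝ := fun q => if q ≤ N + 1 then x q else x (N + 1) + ((q - (N + 1) : ℕ) : ℝ)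
      with hX
    have hXmono : StrictMono X := by
      apply strictMono_nat_of_lt_succ
      intro n
      by_cases h1 : n + 1 ≤ N + 1
      · simp only [hX]
        rw [if_pos (by omega), if_pos h1]
        exact hx n (by omega)
      · by_cases h2 : n ≤ N + 1
        · have hn : n = N + 1 := by omega
          simp only [hX]
          rw [if_pos h2, if_neg h1, hn]
          have : ((n + 1 - (N + 1) : ℕ) : ℝ) > 0 := by
            have : n + 1 - (N + 1) = 1 := by omega
            rw [this]; norm_num
          rw [hn] at this
          linarith
        · simp only [hX]
          rw [if_neg h2, if_neg h1]
          have : ((n - (N + 1) : ℕ) : ℝ) < ((n + 1 - (N + 1) : ℕ) : ℝ) := by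
            exact_mod_cast Nat.sub_lt_sub_right (by omega) (by omega)
          linarith
    set dom : ℕ → ℕ → ℝ := fun q ν => if h : q ≤ N + 1 ∧ ν < d then κ q ⟨ν, h.2⟩ else 0
      with hdom
    set S : S4.Dat := ⟨W, k, d, X, dom⟩ with hS
    have G : S4.Dat.Good S := by
      refine ⟨?_, ?_, ?_, ?_, ?_⟩
      · show (6 : ℕ) ≤ W
        omega
      · exact hd
      · exact hk1
      · exact hdk
      · exact hXmono
    set g0 : ℕ → ℝ := fun ν => if h : ν < d then f (x 0) ⟨ν, h⟩ else 0 with hg0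
    have hL1 : 1 ≤ L' + 1 := by omega
    refine ⟨(S4.Dat.net S (L' + 1) g0 hL1).eval, ⟨_, rfl, ?_, rfl⟩, ?_⟩
    · intro ℓ h1 h2
      rw [show (S4.Dat.net S (L' + 1) g0 hL1).width ℓ = S.W + S.d + 1 from
        S4.Dat.widthF_hidden S (L' + 1) h1 h2]
    · funext t
      funext ν
      rw [S4.Dat.net_eval G L' g0 hL1 t ν]
      have hN' : N ≤ W * k * (L' + 1) := by rw [hk]; exact hN
      have hcap : N + 2 ≤ (L' + 1) * S.D :=
        capacity W d k (L' + 1) N hd hL hdk hk1 hN' 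
      have hsum : ∑ q ∈ Finset.range ((L' + 1) * S.D), S.dom q ν.val * relu (t - S.X q)
          = ∑ q ∈ Finset.range (N + 2), κ q ν * relu (t - x q) := by
        rw [← Finset.sum_subset (Finset.range_subset_range.mpr hcap) (fun q _ hq => by
          have hq2 : ¬ (q ≤ N + 1) := by simp only [Finset.mem_range] at hq; omega
          show dom q ν.val * relu (t - X q) = 0
          rw [hdom]
          simp only
          rw [dif_neg (by tauto), zero_mul])]
        apply Finset.sum_congr rfl
        intro q hq
        simp only [Finset.mem_range] at hq
        show dom q ν.val * relu (t - X q) = κ q ν * relu (t - x q)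
        rw [hdom, hX]
        simp only
        rw [dif_pos ⟨by omega, ν.isLt⟩, if_pos (by omega : q ≤ N + 1)]
      rw [hsum]
      have hg0v : g0 ν.val = f (x 0) ν := by
        rw [hg0]
        simp only
        rw [dif_pos ν.isLt]
      rw [hg0v, ← hκ t ν]


-- check
-- #print axioms statement4
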